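/- arXiv:1706.04048 — 6 statements merged into one kernel-verified Lean document; each statement's English description precedes it below -/
import Mathlib

section
/- Let ν : ℝ → ℝⁿ → ℝⁿ be an admissible time-dependent vector field. Then for every s ∈ [0,1] and every x ∈ ℝⁿ there exists a unique continuous curve ψ : [0,1] → ℝⁿ satisfying the flow equation in integral form ψ(t) = x + ∫_s^t ν(r, ψ(r)) dr for all t ∈ [0,1]. -/
open MeasureTheory Set Filter

open Topology
open scoped ENNReal NNReal

lemma simplex_lintegral_Iio (μ : Measure ℝ) [IsFiniteMeasure μ] (k : ℕ) :
    (k + 1 : ℝ≥0∞) * ∫⁻ r, (μ (Set.Iio r)) ^ k ∂μ ≤ (μ Set.univ) ^ (k + 1) := by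
  classical
  set pm : Measure (Fin (k+1) → ℝ) := Measure.pi (fun _ : Fin (k+1) => μ) with hpm
  set R : Fin (k+1) → Set (Fin (k+1) → ℝ) := fun i => {u | ∀ j, j ≠ i → u j < u i} with hR
  have hRmeas : ∀ i, MeasurableSet (R i) := by
    intro i
    have h1 : R i = ⋂ j, {u : Fin (k+1) → ℝ | j ≠ i → u j < u i} := by
      ext u; simp [hR, Set.mem_iInter]
    rw [h1]
    refine MeasurableSet.iInter fun j => ?_
    by_cases h : j = i
    · subst h; simp
    · have : {u : Fin (k+1) → ℝ | j ≠ i → u j < u i} = {u | u j < u i} := by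
        ext u; simp [h]
      rw [this]
      exact measurableSet_lt (measurable_pi_apply j) (measurable_pi_apply i)
  have hdisj : Pairwise (Function.onFun Disjoint R) := by
    intro i j hij
    refine Set.disjoint_left.2 fun u hui huj => ?_
    exact lt_asymm (hui j (Ne.symm hij)) (huj i hij)
  have hmeasS : MeasurableSet {p : ℝ × (Fin k → ℝ) | ∀ j, p.2 j < p.1} := by
    have h1 : {p : ℝ × (Fin k → ℝ) | ∀ j, p.2 j < p.1} = ⋂ j, {p : ℝ × (Fin k → ℝ) | p.2 j < p.1} := by
      ext p; simp [Set.mem_iInter]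
    rw [h1]
    exact MeasurableSet.iInter fun j =>
      measurableSet_lt (measurable_snd.eval) measurable_fst
  have hRval : ∀ i, pm (R i) = ∫⁻ r, (μ (Set.Iio r)) ^ k ∂μ := by
    intro i
    have hmp := measurePreserving_piFinSuccAbove (fun _ : Fin (k+1) => μ) i
    have hpre : (MeasurableEquiv.piFinSuccAbove (fun _ => ℝ) i) ⁻¹' {p : ℝ × (Fin k → ℝ) | ∀ j, p.2 j < p.1} = R i := by
      ext u
      simp only [Set.mem_preimage, MeasurableEquiv.piFinSuccAbove_apply, Set.mem_setOf_eq, hR,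
        Fin.insertNthEquiv, Equiv.coe_fn_symm_mk]
      constructor
      · intro h j hj
        obtain ⟨j', rfl⟩ := Fin.exists_succAbove_eq hj
        exact h j'
      · intro h j
        exact h _ (Fin.succAbove_ne i j)
    have h2 : pm (R i) = (μ.prod (Measure.pi fun _ : Fin k => μ)) {p : ℝ × (Fin k → ℝ) | ∀ j, p.2 j < p.1} := by
      rw [← hmp.map_eq, MeasurableEquiv.map_apply, hpre]
    rw [h2, Measure.prod_apply hmeasS]
    congr 1
    ext r
    have h3 : (Prod.mk r ⁻¹' {p : ℝ × (Fin k → ℝ) | ∀ j, p.2 j < p.1}) =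
        Set.pi Set.univ (fun _ : Fin k => Set.Iio r) := by
      ext v; simp [Set.mem_pi]
    rw [h3, Measure.pi_pi]
    simp [Finset.prod_const]
  have hsum : ∑' i : Fin (k+1), pm (R i) ≤ pm Set.univ := by
    rw [← measure_iUnion hdisj hRmeas]
    exact measure_mono (Set.subset_univ _)
  have hunion : pm Set.univ = (μ Set.univ) ^ (k+1) := by
    rw [hpm, Measure.pi_univ]
    simp [Finset.prod_const]
  rw [tsum_fintype] at hsum
  simp only [hRval, Finset.sum_const, Finset.card_univ, Fintype.card_fin, nsmul_eq_mul] at hsum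
  rw [hunion] at hsum
  convert hsum using 2
  push_cast
  ring

lemma simplex_lintegral_Ioi (μ : Measure ℝ) [IsFiniteMeasure μ] (k : ℕ) :
    (k + 1 : ℝ≥0∞) * ∫⁻ r, (μ (Set.Ioi r)) ^ k ∂μ ≤ (μ Set.univ) ^ (k + 1) := by
  classical
  set pm : Measure (Fin (k+1) → ℝ) := Measure.pi (fun _ : Fin (k+1) => μ) with hpm
  set R : Fin (k+1) → Set (Fin (k+1) → ℝ) := fun i => {u | ∀ j, j ≠ i → u i < u j} with hR
  have hRmeas : ∀ i, MeasurableSet (R i) := by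
    intro i
    have h1 : R i = ⋂ j, {u : Fin (k+1) → ℝ | j ≠ i → u i < u j} := by
      ext u; simp [hR, Set.mem_iInter]
    rw [h1]
    refine MeasurableSet.iInter fun j => ?_
    by_cases h : j = i
    · subst h; simp
    · have : {u : Fin (k+1) → ℝ | j ≠ i → u i < u j} = {u | u i < u j} := by
        ext u; simp [h]
      rw [this]
      exact measurableSet_lt (measurable_pi_apply i) (measurable_pi_apply j)
  have hdisj : Pairwise (Function.onFun Disjoint R) := by
    intro i j hij
    refine Set.disjoint_left.2 fun u hui huj => ?_
    exact lt_asymm (hui j (Ne.symm hij)) (huj i hij)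
  have hmeasS : MeasurableSet {p : ℝ × (Fin k → ℝ) | ∀ j, p.1 < p.2 j} := by
    have h1 : {p : ℝ × (Fin k → ℝ) | ∀ j, p.1 < p.2 j} = ⋂ j, {p : ℝ × (Fin k → ℝ) | p.1 < p.2 j} := by
      ext p; simp [Set.mem_iInter]
    rw [h1]
    exact MeasurableSet.iInter fun j =>
      measurableSet_lt measurable_fst (measurable_snd.eval)
  have hRval : ∀ i, pm (R i) = ∫⁻ r, (μ (Set.Ioi r)) ^ k ∂μ := by
    intro i
    have hmp := measurePreserving_piFinSuccAbove (fun _ : Fin (k+1) => μ) i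
    have hpre : (MeasurableEquiv.piFinSuccAbove (fun _ => ℝ) i) ⁻¹' {p : ℝ × (Fin k → ℝ) | ∀ j, p.1 < p.2 j} = R i := by
      ext u
      simp only [Set.mem_preimage, MeasurableEquiv.piFinSuccAbove_apply, Set.mem_setOf_eq, hR,
        Fin.insertNthEquiv, Equiv.coe_fn_symm_mk]
      constructor
      · intro h j hj
        obtain ⟨j', rfl⟩ := Fin.exists_succAbove_eq hj
        exact h j'
      · intro h j
        exact h _ (Fin.succAbove_ne i j)
    have h2 : pm (R i) = (μ.prod (Measure.pi fun _ : Fin k => μ)) {p : ℝ × (Fin k → ℝ) | ∀ j, p.1 < p.2 j} := by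
      rw [← hmp.map_eq, MeasurableEquiv.map_apply, hpre]
    rw [h2, Measure.prod_apply hmeasS]
    congr 1
    ext r
    have h3 : (Prod.mk r ⁻¹' {p : ℝ × (Fin k → ℝ) | ∀ j, p.1 < p.2 j}) =
        Set.pi Set.univ (fun _ : Fin k => Set.Ioi r) := by
      ext v; simp [Set.mem_pi]
    rw [h3, Measure.pi_pi]
    simp [Finset.prod_const]
  have hsum : ∑' i : Fin (k+1), pm (R i) ≤ pm Set.univ := by
    rw [← measure_iUnion hdisj hRmeas]
    exact measure_mono (Set.subset_univ _)
  have hunion : pm Set.univ = (μ Set.univ) ^ (k+1) := by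
    rw [hpm, Measure.pi_univ]
    simp [Finset.prod_const]
  rw [tsum_fintype] at hsum
  simp only [hRval, Finset.sum_const, Finset.card_univ, Fintype.card_fin, nsmul_eq_mul] at hsum
  rw [hunion] at hsum
  convert hsum using 2
  push_cast
  ring

lemma keyB_right (ℓ : ℝ → ℝ) (a t : ℝ) (hat : a ≤ t)
    (hint : IntegrableOn ℓ (Ioc a t))
    (hnn : ∀ r ∈ Ioc a t, 0 ≤ ℓ r) (k : ℕ) :
    ∫ r in Ioc a t, ℓ r * (∫ u in Ioc a r, ℓ u) ^ k ≤
      (∫ u in Ioc a t, ℓ u) ^ (k + 1) / (k + 1) := by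
  set L : ℝ → ℝ := fun r => ∫ u in Ioc a r, ℓ u with hLdef
  have hnn' : 0 ≤ᵐ[volume.restrict (Ioc a t)] ℓ :=
    (ae_restrict_iff' measurableSet_Ioc).2 (Filter.Eventually.of_forall hnn)
  have hintsub : ∀ r, r ≤ t → IntegrableOn ℓ (Ioc a r) :=
    fun r hr => hint.mono_set (Ioc_subset_Ioc le_rfl hr)
  have hnnsub : ∀ r, r ≤ t → 0 ≤ᵐ[volume.restrict (Ioc a r)] ℓ := fun r hr =>
    (ae_restrict_iff' measurableSet_Ioc).2 (Filter.Eventually.of_forall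
      (fun u hu => hnn u ⟨hu.1, hu.2.trans hr⟩))
  -- the density measure
  set f : ℝ → ℝ≥0∞ := fun r => ENNReal.ofReal (ℓ r) with hfdef
  have hfmeas : AEMeasurable f (volume.restrict (Ioc a t)) :=
    hint.aestronglyMeasurable.aemeasurable.ennreal_ofReal
  set μ : Measure ℝ := (volume.restrict (Ioc a t)).withDensity f with hμdef
  have hμapp : ∀ s : Set ℝ, MeasurableSet s →
      μ s = ∫⁻ u in Ioc a t ∩ s, f u := by
    intro s hsm
    rw [hμdef, withDensity_apply _ hsm, Measure.restrict_restrict hsm, Set.inter_comm]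
  have hμuniv : μ univ = ENNReal.ofReal (L t) := by
    rw [hμapp univ MeasurableSet.univ, Set.inter_univ,
      ← ofReal_integral_eq_lintegral_ofReal hint hnn']
  have hfin : IsFiniteMeasure μ := by
    constructor
    rw [hμuniv]; exact ENNReal.ofReal_lt_top
  -- identify μ (Iio r)
  have hIio : ∀ r ∈ Ioc a t, μ (Iio r) = ENNReal.ofReal (L r) := by
    intro r hr
    rw [hμapp _ measurableSet_Iio]
    have h1 : Ioc a t ∩ Iio r = Ioo a r := by
      ext u
      simp only [mem_inter_iff, mem_Ioc, mem_Iio, mem_Ioo]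
      exact ⟨fun h => ⟨h.1.1, h.2⟩, fun h => ⟨⟨h.1, h.2.le.trans hr.2⟩, h.2⟩⟩
    rw [h1, setLIntegral_congr (Ioo_ae_eq_Ioc (a := a) (b := r)),
      ← ofReal_integral_eq_lintegral_ofReal (hintsub r hr.2) (hnnsub r hr.2)]
  -- continuity of L on [a,t]
  have hLcont : ContinuousOn L (Icc a t) := by
    have := intervalIntegral.continuousOn_primitive (f := ℓ) (a := a) (b := t) (μ := volume)
      ((integrableOn_Icc_iff_integrableOn_Ioc).2 hint)
    exact this
  have hLmeas : AEStronglyMeasurable L (volume.restrict (Ioc a t)) :=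
    (hLcont.aestronglyMeasurable measurableSet_Icc).mono_measure
      (Measure.restrict_mono Ioc_subset_Icc_self le_rfl)
  have hLnn : ∀ r, r ≤ t → 0 ≤ L r := fun r hr =>
    setIntegral_nonneg measurableSet_Ioc (fun u hu => hnn u ⟨hu.1, hu.2.trans hr⟩)
  -- integrand nonneg
  have hinn : ∀ r ∈ Ioc a t, 0 ≤ ℓ r * L r ^ k := fun r hr =>
    mul_nonneg (hnn r hr) (pow_nonneg (hLnn r hr.2) k)
  have hinn' : 0 ≤ᵐ[volume.restrict (Ioc a t)] fun r => ℓ r * L r ^ k :=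
    (ae_restrict_iff' measurableSet_Ioc).2 (Filter.Eventually.of_forall hinn)
  have hmeas2 : AEStronglyMeasurable (fun r => ℓ r * L r ^ k) (volume.restrict (Ioc a t)) :=
    hint.aestronglyMeasurable.mul (hLmeas.pow k)
  rw [integral_eq_lintegral_of_nonneg_ae hinn' hmeas2]
  -- key : lintegral bound
  have hkey : (∫⁻ r in Ioc a t, ENNReal.ofReal (ℓ r * L r ^ k)) ≤
      (ENNReal.ofReal (L t)) ^ (k + 1) / (k + 1) := by
    have hgm : Measurable (fun r => (μ (Iio r)) ^ k) :=
      (Monotone.measurable (fun u v huv => measure_mono (Iio_subset_Iio huv))).pow_const k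
    have h2 : (∫⁻ r, (μ (Iio r)) ^ k ∂μ) =
        ∫⁻ r in Ioc a t, f r * (μ (Iio r)) ^ k :=
      lintegral_withDensity_eq_lintegral_mul₀ hfmeas hgm.aemeasurable
    have h3 : (∫⁻ r in Ioc a t, ENNReal.ofReal (ℓ r * L r ^ k)) =
        ∫⁻ r, (μ (Iio r)) ^ k ∂μ := by
      rw [h2]
      refine lintegral_congr_ae ?_
      filter_upwards [ae_restrict_mem measurableSet_Ioc] with r hr
      rw [ENNReal.ofReal_mul (hnn r hr), hIio r hr, ← ENNReal.ofReal_pow (hLnn r hr.2)]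
    rw [h3]
    have := simplex_lintegral_Iio μ k
    rw [hμuniv] at this
    rw [ENNReal.le_div_iff_mul_le (by simp) (by simp)]
    calc (∫⁻ r, (μ (Iio r)) ^ k ∂μ) * (k + 1) = (k + 1 : ℝ≥0∞) * ∫⁻ r, (μ (Iio r)) ^ k ∂μ := by
          ring
      _ ≤ _ := this
  calc (∫⁻ r in Ioc a t, ENNReal.ofReal (ℓ r * L r ^ k)).toReal
      ≤ ((ENNReal.ofReal (L t)) ^ (k + 1) / (k + 1)).toReal := by
        apply ENNReal.toReal_mono _ hkey
        refine (ENNReal.div_lt_top (by simp [ENNReal.pow_lt_top, ENNReal.ofReal_lt_top]) (by simp)).ne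
    _ = (L t) ^ (k + 1) / (k + 1) := by
        rw [ENNReal.toReal_div, ENNReal.toReal_pow, ENNReal.toReal_ofReal (hLnn t le_rfl)]
        norm_num [ENNReal.toReal_add]

lemma keyB_left (ℓ : ℝ → ℝ) (a t : ℝ) (hat : a ≤ t)
    (hint : IntegrableOn ℓ (Ioc a t))
    (hnn : ∀ r ∈ Ioc a t, 0 ≤ ℓ r) (k : ℕ) :
    ∫ r in Ioc a t, ℓ r * (∫ u in Ioc r t, ℓ u) ^ k ≤
      (∫ u in Ioc a t, ℓ u) ^ (k + 1) / (k + 1) := by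
  set M : ℝ → ℝ := fun r => ∫ u in Ioc r t, ℓ u with hMdef
  have hnn' : 0 ≤ᵐ[volume.restrict (Ioc a t)] ℓ :=
    (ae_restrict_iff' measurableSet_Ioc).2 (Filter.Eventually.of_forall hnn)
  have hintsub : ∀ r, a ≤ r → IntegrableOn ℓ (Ioc r t) :=
    fun r hr => hint.mono_set (Ioc_subset_Ioc hr le_rfl)
  have hnnsub : ∀ r, a ≤ r → 0 ≤ᵐ[volume.restrict (Ioc r t)] ℓ := fun r hr =>
    (ae_restrict_iff' measurableSet_Ioc).2 (Filter.Eventually.of_forall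
      (fun u hu => hnn u ⟨lt_of_le_of_lt hr hu.1, hu.2⟩))
  set f : ℝ → ℝ≥0∞ := fun r => ENNReal.ofReal (ℓ r) with hfdef
  have hfmeas : AEMeasurable f (volume.restrict (Ioc a t)) :=
    hint.aestronglyMeasurable.aemeasurable.ennreal_ofReal
  set μ : Measure ℝ := (volume.restrict (Ioc a t)).withDensity f with hμdef
  have hμapp : ∀ s : Set ℝ, MeasurableSet s →
      μ s = ∫⁻ u in Ioc a t ∩ s, f u := by
    intro s hsm
    rw [hμdef, withDensity_apply _ hsm, Measure.restrict_restrict hsm, Set.inter_comm]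
  have hμuniv : μ univ = ENNReal.ofReal (M a) := by
    rw [hμapp univ MeasurableSet.univ, Set.inter_univ,
      ← ofReal_integral_eq_lintegral_ofReal hint hnn']
  have hfin : IsFiniteMeasure μ := by
    constructor
    rw [hμuniv]; exact ENNReal.ofReal_lt_top
  have hIoi : ∀ r ∈ Ioc a t, μ (Ioi r) = ENNReal.ofReal (M r) := by
    intro r hr
    rw [hμapp _ measurableSet_Ioi]
    have h1 : Ioc a t ∩ Ioi r = Ioc r t := by
      ext u
      simp only [mem_inter_iff, mem_Ioc, mem_Ioi]
      exact ⟨fun h => ⟨h.2, h.1.2⟩, fun h => ⟨⟨lt_of_le_of_lt hr.1.le h.1, h.2⟩, h.1⟩⟩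
    rw [h1, ← ofReal_integral_eq_lintegral_ofReal (hintsub r hr.1.le) (hnnsub r hr.1.le)]
  -- continuity of M on [a,t]
  have hLcont : ContinuousOn (fun r => ∫ u in Ioc a r, ℓ u) (Icc a t) :=
    intervalIntegral.continuousOn_primitive (f := ℓ) (a := a) (b := t) (μ := volume)
      ((integrableOn_Icc_iff_integrableOn_Ioc).2 hint)
  have hMeq : EqOn M (fun r => (∫ u in Ioc a t, ℓ u) - ∫ u in Ioc a r, ℓ u) (Icc a t) := by
    intro r hr
    have hsplit : ∫ u in Ioc a t, ℓ u = (∫ u in Ioc a r, ℓ u) + ∫ u in Ioc r t, ℓ u := by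
      rw [← setIntegral_union (Set.Ioc_disjoint_Ioc_of_le le_rfl) measurableSet_Ioc
        (hint.mono_set (Ioc_subset_Ioc le_rfl hr.2)) (hintsub r hr.1),
        Set.Ioc_union_Ioc_eq_Ioc hr.1 hr.2]
    simp only [hMdef]
    linarith [hsplit]
  have hMcont : ContinuousOn M (Icc a t) :=
    (continuousOn_const.sub hLcont).congr hMeq
  have hMmeas : AEStronglyMeasurable M (volume.restrict (Ioc a t)) :=
    (hMcont.aestronglyMeasurable measurableSet_Icc).mono_measure
      (Measure.restrict_mono Ioc_subset_Icc_self le_rfl)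
  have hMnn : ∀ r, a ≤ r → 0 ≤ M r := fun r hr =>
    setIntegral_nonneg measurableSet_Ioc (fun u hu => hnn u ⟨lt_of_le_of_lt hr hu.1, hu.2⟩)
  have hinn : ∀ r ∈ Ioc a t, 0 ≤ ℓ r * M r ^ k := fun r hr =>
    mul_nonneg (hnn r hr) (pow_nonneg (hMnn r hr.1.le) k)
  have hinn' : 0 ≤ᵐ[volume.restrict (Ioc a t)] fun r => ℓ r * M r ^ k :=
    (ae_restrict_iff' measurableSet_Ioc).2 (Filter.Eventually.of_forall hinn)
  have hmeas2 : AEStronglyMeasurable (fun r => ℓ r * M r ^ k) (volume.restrict (Ioc a t)) :=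
    hint.aestronglyMeasurable.mul (hMmeas.pow k)
  rw [integral_eq_lintegral_of_nonneg_ae hinn' hmeas2]
  have hkey : (∫⁻ r in Ioc a t, ENNReal.ofReal (ℓ r * M r ^ k)) ≤
      (ENNReal.ofReal (M a)) ^ (k + 1) / (k + 1) := by
    have hgm : Measurable (fun r => (μ (Ioi r)) ^ k) :=
      (Antitone.measurable (fun u v huv => measure_mono (Ioi_subset_Ioi huv))).pow_const k
    have h2 : (∫⁻ r, (μ (Ioi r)) ^ k ∂μ) =
        ∫⁻ r in Ioc a t, f r * (μ (Ioi r)) ^ k :=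
      lintegral_withDensity_eq_lintegral_mul₀ hfmeas hgm.aemeasurable
    have h3 : (∫⁻ r in Ioc a t, ENNReal.ofReal (ℓ r * M r ^ k)) =
        ∫⁻ r, (μ (Ioi r)) ^ k ∂μ := by
      rw [h2]
      refine lintegral_congr_ae ?_
      filter_upwards [ae_restrict_mem measurableSet_Ioc] with r hr
      rw [ENNReal.ofReal_mul (hnn r hr), hIoi r hr, ← ENNReal.ofReal_pow (hMnn r hr.1.le)]
    rw [h3]
    have := simplex_lintegral_Ioi μ k
    rw [hμuniv] at this
    rw [ENNReal.le_div_iff_mul_le (by simp) (by simp)]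
    calc (∫⁻ r, (μ (Ioi r)) ^ k ∂μ) * (k + 1) = (k + 1 : ℝ≥0∞) * ∫⁻ r, (μ (Ioi r)) ^ k ∂μ := by
          ring
      _ ≤ _ := this
  calc (∫⁻ r in Ioc a t, ENNReal.ofReal (ℓ r * M r ^ k)).toReal
      ≤ ((ENNReal.ofReal (M a)) ^ (k + 1) / (k + 1)).toReal := by
        apply ENNReal.toReal_mono _ hkey
        refine (ENNReal.div_lt_top (by simp [ENNReal.pow_lt_top, ENNReal.ofReal_lt_top]) (by simp)).ne
    _ = (M a) ^ (k + 1) / (k + 1) := by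
        rw [ENNReal.toReal_div, ENNReal.toReal_pow, ENNReal.toReal_ofReal (hMnn a le_rfl)]
        norm_num [ENNReal.toReal_add]

section CompMeas
variable {E : Type*} [NormedAddCommGroup E]

/-- composition with a countably-valued measurable function -/
lemma comp_floor_meas (ν : ℝ → E → E)
    (hmeas : ∀ x, AEStronglyMeasurable (fun t => ν t x) (volume.restrict (Icc (0:ℝ) 1)))
    (c : ℤ → E) (m : ℝ) :
    AEStronglyMeasurable (fun t => ν t (c ⌊t * m⌋)) (volume.restrict (Icc (0:ℝ) 1)) := by
  set μ : Measure ℝ := volume.restrict (Icc (0:ℝ) 1) with hμ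
  set s : ℤ → Set ℝ := fun i => (fun t : ℝ => ⌊t * m⌋) ⁻¹' {i} with hs
  have hsm : ∀ i, MeasurableSet (s i) :=
    fun i => (Int.measurable_floor.comp (measurable_id.mul_const m)) (measurableSet_singleton i)
  have hU : (⋃ i, s i) = univ := by
    ext t; simp [hs]
  have h1 : AEStronglyMeasurable (fun t => ν t (c ⌊t * m⌋)) (μ.restrict (⋃ i, s i)) := by
    rw [aestronglyMeasurable_iUnion_iff]
    intro i
    refine AEStronglyMeasurable.congr
      (((hmeas (c i)).mono_measure Measure.restrict_le_self : _)) ?_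
    filter_upwards [ae_restrict_mem (hsm i)] with t ht
    have : ⌊t * m⌋ = i := ht
    rw [this]
  rwa [hU, Measure.restrict_univ] at h1

/-- Carathéodory-type composition: `t ↦ ν t (h t)` is a.e. strongly measurable when `h` is
continuous and `ν` is measurable in `t` and Lipschitz in the space variable. -/
lemma comp_cont_meas (ν : ℝ → E → E) (ℓ : ℝ → ℝ)
    (hmeas : ∀ x, AEStronglyMeasurable (fun t => ν t x) (volume.restrict (Icc (0:ℝ) 1)))
    (hlip : ∀ t ∈ Icc (0:ℝ) 1, ∀ x y, ‖ν t x - ν t y‖ ≤ ℓ t * ‖x - y‖)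
    (h : ℝ → E) (hh : Continuous h) :
    AEStronglyMeasurable (fun t => ν t (h t)) (volume.restrict (Icc (0:ℝ) 1)) := by
  have hq : ∀ t : ℝ, Tendsto (fun k : ℕ => (⌊t * (k+1:ℝ)⌋ : ℝ) / (k+1)) atTop (𝓝 t) := by
    intro t
    have h1 : ∀ k : ℕ, ‖(⌊t * (k+1:ℝ)⌋ : ℝ) / (k+1) - t‖ ≤ 1 / (k+1) := by
      intro k
      have hk : (0:ℝ) < k + 1 := by positivity
      have habs : |(⌊t * (k+1:ℝ)⌋ : ℝ) - t * (k+1:ℝ)| ≤ 1 := by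
        have h1 := Int.floor_le (t * (k+1:ℝ))
        have h2 := Int.lt_floor_add_one (t * (k+1:ℝ))
        rw [abs_le]; constructor <;> linarith
      have heq : (⌊t * (k+1:ℝ)⌋ : ℝ) / (k+1) - t = ((⌊t * (k+1:ℝ)⌋ : ℝ) - t * (k+1:ℝ)) / (k+1) := by
        field_simp
      rw [Real.norm_eq_abs, heq, abs_div, abs_of_pos hk]
      gcongr
    have h2 : Tendsto (fun k : ℕ => (⌊t * (k+1:ℝ)⌋ : ℝ) / (k+1) - t) atTop (𝓝 0) :=
      squeeze_zero_norm h1 tendsto_one_div_add_atTop_nhds_zero_nat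
    have h3 := h2.add (tendsto_const_nhds (x := t))
    simpa using h3
  have key : ∀ t ∈ Icc (0:ℝ) 1,
      Tendsto (fun k : ℕ => ν t (h ((⌊t * (k+1:ℝ)⌋ : ℝ) / (k+1)))) atTop (𝓝 (ν t (h t))) := by
    intro t ht
    have h4 : Tendsto (fun k : ℕ => h ((⌊t * (k+1:ℝ)⌋ : ℝ) / (k+1))) atTop (𝓝 (h t)) :=
      (hh.tendsto t).comp (hq t)
    have h5 : Tendsto (fun k : ℕ => ‖h ((⌊t * (k+1:ℝ)⌋ : ℝ) / (k+1)) - h t‖) atTop (𝓝 0) := by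
      have := (h4.sub (tendsto_const_nhds (x := h t))).norm
      simpa using this
    have h6 : Tendsto (fun k : ℕ => ℓ t * ‖h ((⌊t * (k+1:ℝ)⌋ : ℝ) / (k+1)) - h t‖) atTop (𝓝 0) := by
      have := h5.const_mul (ℓ t)
      simpa using this
    have h7 : Tendsto (fun k : ℕ =>
        ν t (h ((⌊t * (k+1:ℝ)⌋ : ℝ) / (k+1))) - ν t (h t)) atTop (𝓝 0) :=
      squeeze_zero_norm (fun k => (hlip t ht _ _).trans (le_refl _)) h6
    have := h7.add (tendsto_const_nhds (x := ν t (h t)))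
    simpa using this
  refine aestronglyMeasurable_of_tendsto_ae atTop
    (fun k : ℕ => comp_floor_meas ν hmeas (fun i => h ((i:ℝ)/(k+1))) (k+1)) ?_
  filter_upwards [ae_restrict_mem measurableSet_Icc] with t ht
  exact key t ht
end CompMeas

lemma keyC_right (ℓ : ℝ → ℝ) (a t : ℝ) (hat : a ≤ t)
    (hint : IntegrableOn ℓ (Ioc a t))
    (hnn : ∀ r ∈ Ioc a t, 0 ≤ ℓ r) (k : ℕ) (c : ℝ) (hc : 0 ≤ c)
    (g : ℝ → ℝ) (hg : IntegrableOn g (Ioc a t))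
    (hgb : ∀ r ∈ Ioc a t, g r ≤ ℓ r * (∫ u in Ioc a r, ℓ u) ^ k * c) :
    ∫ r in Ioc a t, g r ≤ (∫ u in Ioc a t, ℓ u) ^ (k + 1) / (k + 1) * c := by
  have hnn' : 0 ≤ᵐ[volume.restrict (Ioc a t)] ℓ :=
    (ae_restrict_iff' measurableSet_Ioc).2 (Filter.Eventually.of_forall hnn)
  have hLcont : ContinuousOn (fun r => ∫ u in Ioc a r, ℓ u) (Icc a t) :=
    intervalIntegral.continuousOn_primitive ((integrableOn_Icc_iff_integrableOn_Ioc).2 hint)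
  have hLmeas : AEStronglyMeasurable (fun r => ∫ u in Ioc a r, ℓ u)
      (volume.restrict (Ioc a t)) :=
    (hLcont.aestronglyMeasurable measurableSet_Icc).mono_measure
      (Measure.restrict_mono Ioc_subset_Icc_self le_rfl)
  have hLnn : ∀ r, r ≤ t → 0 ≤ (∫ u in Ioc a r, ℓ u) := fun r hr =>
    setIntegral_nonneg measurableSet_Ioc (fun u hu => hnn u ⟨hu.1, hu.2.trans hr⟩)
  have hLle : ∀ r ∈ Ioc a t, (∫ u in Ioc a r, ℓ u) ≤ (∫ u in Ioc a t, ℓ u) := fun r hr =>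
    setIntegral_mono_set hint hnn' (HasSubset.Subset.eventuallyLE (Ioc_subset_Ioc le_rfl hr.2))
  have hint2 : IntegrableOn (fun r => ℓ r * (∫ u in Ioc a r, ℓ u) ^ k * c) (Ioc a t) := by
    refine Integrable.mul_const ?_ _
    have h1 : Integrable (fun r => (∫ u in Ioc a r, ℓ u) ^ k * ℓ r)
        (volume.restrict (Ioc a t)) := by
      refine Integrable.bdd_mul (c := (∫ u in Ioc a t, ℓ u) ^ k) hint
        (hLmeas.aemeasurable.pow_const k).aestronglyMeasurable ?_
      filter_upwards [ae_restrict_mem measurableSet_Ioc] with r hr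
      rw [Real.norm_eq_abs, abs_of_nonneg (pow_nonneg (hLnn r hr.2) k)]
      exact pow_le_pow_left₀ (hLnn r hr.2) (hLle r hr) k
    simpa [mul_comm] using h1
  calc ∫ r in Ioc a t, g r
      ≤ ∫ r in Ioc a t, ℓ r * (∫ u in Ioc a r, ℓ u) ^ k * c :=
        setIntegral_mono_on hg hint2 measurableSet_Ioc hgb
    _ = (∫ r in Ioc a t, ℓ r * (∫ u in Ioc a r, ℓ u) ^ k) * c := integral_mul_const _ _
    _ ≤ (∫ u in Ioc a t, ℓ u) ^ (k + 1) / (k + 1) * c :=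
        mul_le_mul_of_nonneg_right (keyB_right ℓ a t hat hint hnn k) hc

lemma keyC_left (ℓ : ℝ → ℝ) (a t : ℝ) (hat : a ≤ t)
    (hint : IntegrableOn ℓ (Ioc a t))
    (hnn : ∀ r ∈ Ioc a t, 0 ≤ ℓ r) (k : ℕ) (c : ℝ) (hc : 0 ≤ c)
    (g : ℝ → ℝ) (hg : IntegrableOn g (Ioc a t))
    (hgb : ∀ r ∈ Ioc a t, g r ≤ ℓ r * (∫ u in Ioc r t, ℓ u) ^ k * c) :
    ∫ r in Ioc a t, g r ≤ (∫ u in Ioc a t, ℓ u) ^ (k + 1) / (k + 1) * c := by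
  have hnn' : 0 ≤ᵐ[volume.restrict (Ioc a t)] ℓ :=
    (ae_restrict_iff' measurableSet_Ioc).2 (Filter.Eventually.of_forall hnn)
  have hintsub : ∀ r, a ≤ r → IntegrableOn ℓ (Ioc r t) :=
    fun r hr => hint.mono_set (Ioc_subset_Ioc hr le_rfl)
  have hLcont : ContinuousOn (fun r => ∫ u in Ioc a r, ℓ u) (Icc a t) :=
    intervalIntegral.continuousOn_primitive ((integrableOn_Icc_iff_integrableOn_Ioc).2 hint)
  have hMeq : EqOn (fun r => ∫ u in Ioc r t, ℓ u)
      (fun r => (∫ u in Ioc a t, ℓ u) - ∫ u in Ioc a r, ℓ u) (Icc a t) := by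
    intro r hr
    have hsplit : ∫ u in Ioc a t, ℓ u = (∫ u in Ioc a r, ℓ u) + ∫ u in Ioc r t, ℓ u := by
      rw [← setIntegral_union (Set.Ioc_disjoint_Ioc_of_le le_rfl) measurableSet_Ioc
        (hint.mono_set (Ioc_subset_Ioc le_rfl hr.2)) (hintsub r hr.1),
        Set.Ioc_union_Ioc_eq_Ioc hr.1 hr.2]
    simp only []
    linarith [hsplit]
  have hMcont : ContinuousOn (fun r => ∫ u in Ioc r t, ℓ u) (Icc a t) :=
    (continuousOn_const.sub hLcont).congr hMeq
  have hMmeas : AEStronglyMeasurable (fun r => ∫ u in Ioc r t, ℓ u)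
      (volume.restrict (Ioc a t)) :=
    (hMcont.aestronglyMeasurable measurableSet_Icc).mono_measure
      (Measure.restrict_mono Ioc_subset_Icc_self le_rfl)
  have hMnn : ∀ r, a ≤ r → 0 ≤ (∫ u in Ioc r t, ℓ u) := fun r hr =>
    setIntegral_nonneg measurableSet_Ioc (fun u hu => hnn u ⟨lt_of_le_of_lt hr hu.1, hu.2⟩)
  have hMle : ∀ r ∈ Ioc a t, (∫ u in Ioc r t, ℓ u) ≤ (∫ u in Ioc a t, ℓ u) := fun r hr =>
    setIntegral_mono_set hint hnn' (HasSubset.Subset.eventuallyLE (Ioc_subset_Ioc hr.1.le le_rfl))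
  have hint2 : IntegrableOn (fun r => ℓ r * (∫ u in Ioc r t, ℓ u) ^ k * c) (Ioc a t) := by
    refine Integrable.mul_const ?_ _
    have h1 : Integrable (fun r => (∫ u in Ioc r t, ℓ u) ^ k * ℓ r)
        (volume.restrict (Ioc a t)) := by
      refine Integrable.bdd_mul (c := (∫ u in Ioc a t, ℓ u) ^ k) hint
        (hMmeas.aemeasurable.pow_const k).aestronglyMeasurable ?_
      filter_upwards [ae_restrict_mem measurableSet_Ioc] with r hr
      rw [Real.norm_eq_abs, abs_of_nonneg (pow_nonneg (hMnn r hr.1.le) k)]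
      exact pow_le_pow_left₀ (hMnn r hr.1.le) (hMle r hr) k
    simpa [mul_comm] using h1
  calc ∫ r in Ioc a t, g r
      ≤ ∫ r in Ioc a t, ℓ r * (∫ u in Ioc r t, ℓ u) ^ k * c :=
        setIntegral_mono_on hg hint2 measurableSet_Ioc hgb
    _ = (∫ r in Ioc a t, ℓ r * (∫ u in Ioc r t, ℓ u) ^ k) * c := integral_mul_const _ _
    _ ≤ (∫ u in Ioc a t, ℓ u) ^ (k + 1) / (k + 1) * c :=
        mul_le_mul_of_nonneg_right (keyB_left ℓ a t hat hint hnn k) hc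

/-- **Existence and uniqueness of flows.**
Let `ν : ℝ → ℝⁿ → ℝⁿ` be an admissible time-dependent vector field: `t ↦ ν t x` is
measurable on `[0,1]` for each `x`, and there are integrable `ℓ b : [0,1] → [0,∞)` with
`‖ν t x − ν t y‖ ≤ ℓ t * ‖x − y‖` and `‖ν t x‖ ≤ b t`.  Then for every `s ∈ [0,1]` and every
`x ∈ ℝⁿ` there exists a unique continuous curve `ψ : [0,1] → ℝⁿ` satisfying the flow equation
in integral form `ψ t = x + ∫_s^t ν(r, ψ r) dr` for all `t ∈ [0,1]`. -/
theorem flow_existence_uniqueness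
    (n : ℕ) (ν : ℝ → EuclideanSpace ℝ (Fin n) → EuclideanSpace ℝ (Fin n))
    (ℓ b : ℝ → ℝ)
    (hmeas : ∀ x, AEStronglyMeasurable (fun t => ν t x) (volume.restrict (Icc (0:ℝ) 1)))
    (hℓint : IntegrableOn ℓ (Icc (0:ℝ) 1))
    (hbint : IntegrableOn b (Icc (0:ℝ) 1))
    (hℓ0 : ∀ t ∈ Icc (0:ℝ) 1, 0 ≤ ℓ t)
    (hb0 : ∀ t ∈ Icc (0:ℝ) 1, 0 ≤ b t)
    (hlip : ∀ t ∈ Icc (0:ℝ) 1, ∀ x y, ‖ν t x - ν t y‖ ≤ ℓ t * ‖x - y‖)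
    (hbd : ∀ t ∈ Icc (0:ℝ) 1, ∀ x, ‖ν t x‖ ≤ b t)
    (s : ℝ) (hs : s ∈ Icc (0:ℝ) 1) (x : EuclideanSpace ℝ (Fin n)) :
    ∃ ψ : ℝ → EuclideanSpace ℝ (Fin n),
      (ContinuousOn ψ (Icc (0:ℝ) 1) ∧
        ∀ t ∈ Icc (0:ℝ) 1, ψ t = x + ∫ r in s..t, ν r (ψ r)) ∧
      (∀ ψ' : ℝ → EuclideanSpace ℝ (Fin n),
        (ContinuousOn ψ' (Icc (0:ℝ) 1) ∧
          ∀ t ∈ Icc (0:ℝ) 1, ψ' t = x + ∫ r in s..t, ν r (ψ' r)) →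
        ∀ t ∈ Icc (0:ℝ) 1, ψ' t = ψ t) := by
  classical
  have le01 : (0:ℝ) ≤ 1 := zero_le_one
  haveI : Nonempty C(↥(Icc (0:ℝ) 1), EuclideanSpace ℝ (Fin n)) := ⟨ContinuousMap.const _ x⟩
  let ext0 : C(↥(Icc (0:ℝ) 1), EuclideanSpace ℝ (Fin n)) → ℝ → EuclideanSpace ℝ (Fin n) :=
    fun ψ r => ψ (projIcc 0 1 le01 r)
  have hext_eq : ∀ (ψ : C(↥(Icc (0:ℝ) 1), EuclideanSpace ℝ (Fin n))) (r : ℝ)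
      (hr : r ∈ Icc (0:ℝ) 1), ext0 ψ r = ψ ⟨r, hr⟩ := by
    intro ψ r hr
    show ψ (projIcc 0 1 le01 r) = ψ ⟨r, hr⟩
    rw [projIcc_of_mem le01 hr]
  have hg_meas : ∀ ψ : C(↥(Icc (0:ℝ) 1), EuclideanSpace ℝ (Fin n)),
      AEStronglyMeasurable (fun r => ν r (ext0 ψ r)) (volume.restrict (Icc (0:ℝ) 1)) :=
    fun ψ => comp_cont_meas ν ℓ hmeas hlip _ (ψ.continuous.comp (continuous_projIcc))
  have hg_int : ∀ ψ : C(↥(Icc (0:ℝ) 1), EuclideanSpace ℝ (Fin n)),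
      IntegrableOn (fun r => ν r (ext0 ψ r)) (Icc (0:ℝ) 1) := by
    intro ψ
    refine Integrable.mono' hbint (hg_meas ψ) ?_
    filter_upwards [ae_restrict_mem measurableSet_Icc] with r hr
    exact hbd r hr _
  have hsubIcc : ∀ a c : ℝ, a ∈ Icc (0:ℝ) 1 → c ∈ Icc (0:ℝ) 1 → uIoc a c ⊆ Icc (0:ℝ) 1 := by
    intro a c ha hc r hr
    exact ⟨(le_min ha.1 hc.1).trans hr.1.le, hr.2.trans (max_le ha.2 hc.2)⟩
  have hg_ii : ∀ ψ : C(↥(Icc (0:ℝ) 1), EuclideanSpace ℝ (Fin n)), ∀ a c : ℝ,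
      a ∈ Icc (0:ℝ) 1 → c ∈ Icc (0:ℝ) 1 →
      IntervalIntegrable (fun r => ν r (ext0 ψ r)) volume a c := fun ψ a c ha hc =>
    intervalIntegrable_iff.2 ((hg_int ψ).mono_set (hsubIcc a c ha hc))
  -- the Picard operator
  let P : C(↥(Icc (0:ℝ) 1), EuclideanSpace ℝ (Fin n)) →
      C(↥(Icc (0:ℝ) 1), EuclideanSpace ℝ (Fin n)) := fun ψ =>
    ⟨fun τ => x + ∫ r in s..(τ:ℝ), ν r (ext0 ψ r), by
      refine continuous_const.add ?_
      have h1 : ContinuousOn (fun c : ℝ => ∫ r in s..c, ν r (ext0 ψ r)) (uIcc (0:ℝ) 1) :=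
        intervalIntegral.continuousOn_primitive_interval'
          (hg_ii ψ 0 1 (left_mem_Icc.2 le01) (right_mem_Icc.2 le01))
          (by rw [uIcc_of_le le01]; exact hs)
      rw [uIcc_of_le le01] at h1
      exact h1.comp_continuous continuous_subtype_val (fun τ => τ.2)⟩
  have hP_apply : ∀ (ψ : C(↥(Icc (0:ℝ) 1), EuclideanSpace ℝ (Fin n)))
      (τ : ↥(Icc (0:ℝ) 1)), P ψ τ = x + ∫ r in s..(τ:ℝ), ν r (ext0 ψ r) := fun ψ τ => rfl
  -- the weight function
  set Λ : ℝ := ∫ r in Icc (0:ℝ) 1, ℓ r with hΛdef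
  have hnnIcc : 0 ≤ᵐ[volume.restrict (Icc (0:ℝ) 1)] ℓ :=
    (ae_restrict_iff' measurableSet_Icc).2 (Filter.Eventually.of_forall hℓ0)
  have hΛ0 : 0 ≤ Λ := setIntegral_nonneg measurableSet_Icc hℓ0
  set Lw : ℝ → ℝ := fun t => ∫ r in uIoc s t, ℓ r with hLwdef
  have hLw_eq : ∀ t, Lw t = ∫ r in uIoc s t, ℓ r := fun t => rfl
  have hLw0 : ∀ t ∈ Icc (0:ℝ) 1, 0 ≤ Lw t := fun t ht =>
    setIntegral_nonneg measurableSet_uIoc (fun u hu => hℓ0 u (hsubIcc s t hs ht hu))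
  have hLwΛ : ∀ t ∈ Icc (0:ℝ) 1, Lw t ≤ Λ := fun t ht =>
    setIntegral_mono_set hℓint hnnIcc (HasSubset.Subset.eventuallyLE (hsubIcc s t hs ht))
  -- the main contraction estimate
  have main : ∀ (k : ℕ) (ψ φ : C(↥(Icc (0:ℝ) 1), EuclideanSpace ℝ (Fin n)))
      (τ : ↥(Icc (0:ℝ) 1)),
      ‖P^[k] ψ τ - P^[k] φ τ‖ ≤ Lw ↑τ ^ k / (Nat.factorial k) * dist ψ φ := by
    intro k
    induction k with
    | zero =>
      intro ψ φ τ
      calc ‖ψ τ - φ τ‖ = dist (ψ τ) (φ τ) := (dist_eq_norm _ _).symm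
        _ ≤ dist ψ φ := ContinuousMap.dist_apply_le_dist τ
        _ = Lw ↑τ ^ 0 / (Nat.factorial 0) * dist ψ φ := by simp
    | succ k IH =>
      intro ψ φ τ
      have hτIcc : (τ:ℝ) ∈ Icc (0:ℝ) 1 := τ.2
      have hd : (0:ℝ) ≤ dist ψ φ := dist_nonneg
      set Ψ := P^[k] ψ with hΨdef
      set Φ := P^[k] φ with hΦdef
      have hPP : P^[k+1] ψ τ - P^[k+1] φ τ
          = ∫ r in s..(τ:ℝ), (ν r (ext0 Ψ r) - ν r (ext0 Φ r)) := by
        rw [Function.iterate_succ_apply', Function.iterate_succ_apply', ← hΨdef, ← hΦdef,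
          hP_apply, hP_apply, add_sub_add_left_eq_sub,
          ← intervalIntegral.integral_sub (hg_ii Ψ s ↑τ hs hτIcc) (hg_ii Φ s ↑τ hs hτIcc)]
      have hcommon : ∀ r, ∀ hr : r ∈ Icc (0:ℝ) 1,
          ‖ν r (ext0 Ψ r) - ν r (ext0 Φ r)‖
            ≤ ℓ r * (Lw r ^ k / (Nat.factorial k) * dist ψ φ) := by
        intro r hr
        refine (hlip r hr _ _).trans (mul_le_mul_of_nonneg_left ?_ (hℓ0 r hr))
        rw [hext_eq Ψ r hr, hext_eq Φ r hr]
        exact IH ψ φ ⟨r, hr⟩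
      rw [hPP]
      rcases le_total s ↑τ with hsτ | hτs
      · have hsub1 : Ioc s ↑τ ⊆ Icc (0:ℝ) 1 :=
          fun r hr => ⟨hs.1.trans hr.1.le, hr.2.trans hτIcc.2⟩
        have hintΔ : IntegrableOn
            (fun r => ‖ν r (ext0 Ψ r) - ν r (ext0 Φ r)‖) (Ioc s ↑τ) :=
          (((hg_int Ψ).mono_set hsub1).sub ((hg_int Φ).mono_set hsub1)).norm
        rw [intervalIntegral.integral_of_le hsτ]
        calc ‖∫ r in Ioc s ↑τ, (ν r (ext0 Ψ r) - ν r (ext0 Φ r))‖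
            ≤ ∫ r in Ioc s ↑τ, ‖ν r (ext0 Ψ r) - ν r (ext0 Φ r)‖ :=
              norm_integral_le_integral_norm _
          _ ≤ (∫ u in Ioc s ↑τ, ℓ u) ^ (k+1) / (k+1) * (dist ψ φ / (Nat.factorial k)) := by
              refine keyC_right ℓ s ↑τ hsτ (hℓint.mono_set hsub1)
                (fun r hr => hℓ0 r (hsub1 hr)) k _
                (div_nonneg hd (Nat.cast_nonneg _)) _ hintΔ ?_
              intro r hr
              have h1 := hcommon r (hsub1 hr)
              have h2 : Lw r = ∫ u in Ioc s r, ℓ u := by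
                rw [hLw_eq, uIoc_of_le hr.1.le]
              calc ‖ν r (ext0 Ψ r) - ν r (ext0 Φ r)‖
                  ≤ ℓ r * (Lw r ^ k / (Nat.factorial k) * dist ψ φ) := h1
                _ = ℓ r * (∫ u in Ioc s r, ℓ u) ^ k * (dist ψ φ / (Nat.factorial k)) := by
                    rw [h2]; ring
          _ = Lw ↑τ ^ (k+1) / (Nat.factorial (k+1)) * dist ψ φ := by
              have h2 : Lw ↑τ = ∫ u in Ioc s ↑τ, ℓ u := by
                rw [hLw_eq, uIoc_of_le hsτ]
              rw [h2, Nat.factorial_succ]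
              have hkf : (Nat.factorial k : ℝ) ≠ 0 := Nat.cast_ne_zero.2 (Nat.factorial_ne_zero k)
              have hk1 : (k : ℝ) + 1 ≠ 0 := by positivity
              push_cast
              field_simp
      · have hsub1 : Ioc ↑τ s ⊆ Icc (0:ℝ) 1 :=
          fun r hr => ⟨hτIcc.1.trans hr.1.le, hr.2.trans hs.2⟩
        have hintΔ : IntegrableOn
            (fun r => ‖ν r (ext0 Ψ r) - ν r (ext0 Φ r)‖) (Ioc ↑τ s) :=
          (((hg_int Ψ).mono_set hsub1).sub ((hg_int Φ).mono_set hsub1)).norm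
        rw [intervalIntegral.integral_of_ge hτs, norm_neg]
        calc ‖∫ r in Ioc ↑τ s, (ν r (ext0 Ψ r) - ν r (ext0 Φ r))‖
            ≤ ∫ r in Ioc ↑τ s, ‖ν r (ext0 Ψ r) - ν r (ext0 Φ r)‖ :=
              norm_integral_le_integral_norm _
          _ ≤ (∫ u in Ioc ↑τ s, ℓ u) ^ (k+1) / (k+1) * (dist ψ φ / (Nat.factorial k)) := by
              refine keyC_left ℓ ↑τ s hτs (hℓint.mono_set hsub1)
                (fun r hr => hℓ0 r (hsub1 hr)) k _
                (div_nonneg hd (Nat.cast_nonneg _)) _ hintΔ ?_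
              intro r hr
              have h1 := hcommon r (hsub1 hr)
              have h2 : Lw r = ∫ u in Ioc r s, ℓ u := by
                rw [hLw_eq, uIoc_of_ge hr.2]
              calc ‖ν r (ext0 Ψ r) - ν r (ext0 Φ r)‖
                  ≤ ℓ r * (Lw r ^ k / (Nat.factorial k) * dist ψ φ) := h1
                _ = ℓ r * (∫ u in Ioc r s, ℓ u) ^ k * (dist ψ φ / (Nat.factorial k)) := by
                    rw [h2]; ring
          _ = Lw ↑τ ^ (k+1) / (Nat.factorial (k+1)) * dist ψ φ := by
              have h2 : Lw ↑τ = ∫ u in Ioc ↑τ s, ℓ u := by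
                rw [hLw_eq, uIoc_of_ge hτs]
              rw [h2, Nat.factorial_succ]
              have hkf : (Nat.factorial k : ℝ) ≠ 0 := Nat.cast_ne_zero.2 (Nat.factorial_ne_zero k)
              have hk1 : (k : ℝ) + 1 ≠ 0 := by positivity
              push_cast
              field_simp
  -- distance version of the contraction estimate
  have hdistP : ∀ (k : ℕ) (ψ φ : C(↥(Icc (0:ℝ) 1), EuclideanSpace ℝ (Fin n))),
      dist (P^[k] ψ) (P^[k] φ) ≤ Λ ^ k / (Nat.factorial k) * dist ψ φ := by
    intro k ψ φ
    have hq0 : (0:ℝ) ≤ Λ ^ k / (Nat.factorial k) * dist ψ φ :=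
      mul_nonneg (div_nonneg (pow_nonneg hΛ0 k) (Nat.cast_nonneg _)) dist_nonneg
    rw [ContinuousMap.dist_le hq0]
    intro τ
    rw [dist_eq_norm]
    refine (main k ψ φ τ).trans ?_
    have h1 : Lw ↑τ ^ k ≤ Λ ^ k := pow_le_pow_left₀ (hLw0 ↑τ τ.2) (hLwΛ ↑τ τ.2) k
    gcongr
  -- choose an iterate which is a contraction
  obtain ⟨k, hk⟩ : ∃ k : ℕ, Λ ^ k / (Nat.factorial k) < 1 :=
    ((FloorSemiring.tendsto_pow_div_factorial_atTop (K := ℝ) Λ).eventually_lt_const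
      one_pos).exists
  set Kc : NNReal := ⟨Λ ^ k / (Nat.factorial k),
    div_nonneg (pow_nonneg hΛ0 k) (Nat.cast_nonneg _)⟩ with hKcdef
  have hcontr : ContractingWith Kc (P^[k]) := by
    constructor
    · exact NNReal.coe_lt_coe.mp (by exact_mod_cast hk)
    · exact LipschitzWith.of_dist_le_mul fun ψ φ => hdistP k ψ φ
  set Φ0 : C(↥(Icc (0:ℝ) 1), EuclideanSpace ℝ (Fin n)) :=
    ContractingWith.fixedPoint (P^[k]) hcontr with hΦ0def
  have hfix : Function.IsFixedPt P Φ0 := hcontr.isFixedPt_fixedPoint_iterate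
  have hflow : ∀ τ : ↥(Icc (0:ℝ) 1),
      Φ0 τ = x + ∫ r in s..(τ:ℝ), ν r (ext0 Φ0 r) := by
    intro τ
    have h1 := congrArg (fun g : C(↥(Icc (0:ℝ) 1), EuclideanSpace ℝ (Fin n)) => g τ) hfix
    calc Φ0 τ = P Φ0 τ := h1.symm
      _ = x + ∫ r in s..(τ:ℝ), ν r (ext0 Φ0 r) := hP_apply Φ0 τ
  refine ⟨fun t => Φ0 (projIcc 0 1 le01 t), ⟨?_, ?_⟩, ?_⟩
  · exact (Φ0.continuous.comp continuous_projIcc).continuousOn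
  · intro t ht
    show Φ0 (projIcc 0 1 le01 t) = x + ∫ r in s..t, ν r (Φ0 (projIcc 0 1 le01 r))
    rw [projIcc_of_mem le01 ht]
    exact hflow ⟨t, ht⟩
  · rintro ψ' ⟨hc', heq'⟩ t ht
    let φ' : C(↥(Icc (0:ℝ) 1), EuclideanSpace ℝ (Fin n)) := ⟨fun τ => ψ' ↑τ, hc'.restrict⟩
    have hφ'_apply : ∀ τ : ↥(Icc (0:ℝ) 1), φ' τ = ψ' ↑τ := fun τ => rfl
    have hfix' : Function.IsFixedPt P φ' := by
      refine ContinuousMap.ext fun τ => ?_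
      rw [hP_apply]
      have hint_congr : (∫ r in s..(τ:ℝ), ν r (ext0 φ' r)) = ∫ r in s..(τ:ℝ), ν r (ψ' r) := by
        refine intervalIntegral.integral_congr ?_
        intro r hr
        have hrIcc : r ∈ Icc (0:ℝ) 1 :=
          ⟨(le_min hs.1 τ.2.1).trans hr.1, hr.2.trans (max_le hs.2 τ.2.2)⟩
        show ν r (ext0 φ' r) = ν r (ψ' r)
        rw [hext_eq φ' r hrIcc, hφ'_apply]
      rw [hint_congr, ← heq' ↑τ τ.2]
      exact (hφ'_apply τ).symm
    have huniq : φ' = Φ0 := hcontr.fixedPoint_unique (hfix'.iterate k)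
    show ψ' t = Φ0 (projIcc 0 1 le01 t)
    rw [projIcc_of_mem le01 ht, ← huniq]
    exact (hφ'_apply ⟨t, ht⟩).symm
end

section
/- Let (V, j, C) be an admissible Hilbert space of vector fields, Ω ⊂ ℝⁿ a bounded measurable set, and I : ℝⁿ → ℝ a bounded continuous function (the template). For ν ∈ L²([0,1]; V) let φ_ν denote the two-parameter flow of the induced field, and define the deformed template W(ν) : Ω → ℝ by W(ν)(x) = I(φ_ν(1,0,x)) (geometric group action, since φ_ν(1,0,·) is the inverse of φ_ν(0,1,·)). If ν_k ⇀ ν weakly in L²([0,1]; V), then ∫_Ω |W(ν_k)(x) − W(ν)(x)|² dx → 0, i.e. the deformed templates converge in L²(Ω, ℝ). -/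
open MeasureTheory Set Filter
open scoped RealInnerProductSpace

namespace DTaux

noncomputable def Aint (a : ℝ → ℝ) (t : ℝ) : ℝ := ∫ r in Set.Ioc t 1, a r

variable {a : ℝ → ℝ}

lemma Aint_nonneg (ha0 : ∀ r, 0 ≤ a r) (t : ℝ) : 0 ≤ Aint a t :=
  setIntegral_nonneg measurableSet_Ioc fun r _ => ha0 r

lemma Aint_anti (ha : Integrable a volume) (ha0 : ∀ r, 0 ≤ a r) : Antitone (Aint a) := by
  intro s t hst
  exact setIntegral_mono_set ha.integrableOn (Filter.Eventually.of_forall fun r => ha0 r)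
    (HasSubset.Subset.eventuallyLE (Set.Ioc_subset_Ioc_left hst))

lemma Aint_le_integral (ha : Integrable a volume) (ha0 : ∀ r, 0 ≤ a r) (t : ℝ) :
    Aint a t ≤ ∫ r, a r := setIntegral_le_integral ha (.of_forall ha0)

lemma Aint_measurable (ha : Integrable a volume) (ha0 : ∀ r, 0 ≤ a r) :
    Measurable (Aint a) := (Aint_anti ha ha0).measurable

lemma integrable_mul_Aint_pow (ha : Integrable a volume) (ha0 : ∀ r, 0 ≤ a r) (i : ℕ) :
    Integrable (fun r => a r * (Aint a r) ^ i) volume := by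
  have h := ha.bdd_mul (c := (∫ r, a r) ^ i) (((Aint_measurable ha ha0).pow_const i).aestronglyMeasurable)
    (.of_forall fun x => by
      rw [Real.norm_eq_abs, abs_of_nonneg (pow_nonneg (Aint_nonneg ha0 x) i)]
      exact pow_le_pow_left₀ (Aint_nonneg ha0 x) (Aint_le_integral ha ha0 x) i)
  simpa [mul_comm] using h

lemma Aint_split (ha : Integrable a volume) {t s : ℝ} (hts : t ≤ s) (hs1 : s ≤ 1) :
    Aint a t = (∫ r in Set.Ioc t s, a r) + Aint a s := by
  rw [Aint, ← Set.Ioc_union_Ioc_eq_Ioc hts hs1,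
    setIntegral_union (Set.Ioc_disjoint_Ioc_of_le le_rfl) measurableSet_Ioc
      ha.integrableOn ha.integrableOn]
  rfl

lemma integral_mul_Aint_pow (ha : Integrable a volume) (ha0 : ∀ r, 0 ≤ a r) :
    ∀ (i : ℕ) (t : ℝ),
      ∫ r in Set.Ioc t 1, a r * (Aint a r) ^ i = (Aint a t) ^ (i + 1) / (i + 1) := by
  intro i
  induction i with
  | zero => intro t; simp [Aint]
  | succ i ih =>
    intro t
    set A := Aint a with hA
    set P : Set (ℝ × ℝ) := {p : ℝ × ℝ | p.1 < p.2} with hP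
    have hPmeas : MeasurableSet P := measurableSet_lt measurable_fst measurable_snd
    set h : ℝ → ℝ := fun s => a s * A s ^ i with hh
    have hint_h : Integrable h volume := integrable_mul_Aint_pow ha ha0 i
    set Ψ : ℝ × ℝ → ℝ := P.indicator (fun p => a p.1 * h p.2) with hΨ
    have hΨint : Integrable Ψ ((volume.restrict (Set.Ioc t 1)).prod
        (volume.restrict (Set.Ioc t 1))) := by
      refine Integrable.indicator ?_ hPmeas
      exact (ha.integrableOn.mul_prod hint_h.integrableOn)
    have step1 : ∫ r in Set.Ioc t 1, a r * A r ^ (i + 1)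
        = (i + 1 : ℝ) * ∫ r in Set.Ioc t 1, ∫ s in Set.Ioc t 1, Ψ (r, s) := by
      rw [← integral_const_mul]
      refine setIntegral_congr_fun measurableSet_Ioc (fun r hr => ?_)
      have hkey : ∀ s ∈ Set.Ioc t 1,
          Ψ (r, s) = (Set.Ioc r 1).indicator (fun s => a r * h s) s := by
        intro s hs
        by_cases hrs : r < s
        · rw [hΨ, Set.indicator_of_mem (show (r, s) ∈ P from hrs),
            Set.indicator_of_mem (show s ∈ Set.Ioc r 1 from ⟨hrs, hs.2⟩)]
        · rw [hΨ, Set.indicator_of_notMem (show (r, s) ∉ P from hrs),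
            Set.indicator_of_notMem (fun hmem => hrs hmem.1)]
      have hinner : ∫ s in Set.Ioc t 1, Ψ (r, s) = a r * ∫ s in Set.Ioc r 1, h s := by
        rw [setIntegral_congr_fun measurableSet_Ioc hkey,
          setIntegral_indicator measurableSet_Ioc,
          Set.Ioc_inter_Ioc, max_eq_right hr.1.le, min_self, integral_const_mul]
      rw [hinner]
      have h2 : A r ^ (i + 1) = (i + 1 : ℝ) * ∫ s in Set.Ioc r 1, h s := by
        rw [ih r]; field_simp
      rw [h2]; ring
    have step2 : ∫ r in Set.Ioc t 1, ∫ s in Set.Ioc t 1, Ψ (r, s)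
        = ∫ s in Set.Ioc t 1, ∫ r in Set.Ioc t 1, Ψ (r, s) :=
      integral_integral_swap hΨint
    have step3 : ∀ s ∈ Set.Ioc t 1,
        ∫ r in Set.Ioc t 1, Ψ (r, s) = h s * (A t - A s) := by
      intro s hs
      have hptwise : ∀ r ∈ Set.Ioc t 1,
          Ψ (r, s) = (Set.Iio s).indicator (fun r => a r * h s) r := by
        intro r hr
        by_cases hrs : r < s
        · rw [hΨ, Set.indicator_of_mem (show (r, s) ∈ P from hrs),
            Set.indicator_of_mem (show r ∈ Set.Iio s from hrs)]
        · rw [hΨ, Set.indicator_of_notMem (show (r, s) ∉ P from hrs),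
            Set.indicator_of_notMem (show r ∉ Set.Iio s from hrs)]
      rw [setIntegral_congr_fun measurableSet_Ioc hptwise,
        setIntegral_indicator measurableSet_Iio]
      have hseteq : Set.Ioc t 1 ∩ Set.Iio s = Set.Ioo t s := by
        ext r
        constructor
        · rintro ⟨⟨h1, _⟩, h3⟩; exact ⟨h1, h3⟩
        · rintro ⟨h1, h2⟩; exact ⟨⟨h1, le_trans h2.le hs.2⟩, h2⟩
      rw [hseteq, ← integral_Ioc_eq_integral_Ioo, integral_mul_const]
      have hsplit := Aint_split ha hs.1.le hs.2
      rw [← hA] at hsplit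
      have : ∫ r in Set.Ioc t s, a r = A t - A s := by rw [hsplit]; ring
      rw [this]; ring
    have step4 : ∫ s in Set.Ioc t 1, ∫ r in Set.Ioc t 1, Ψ (r, s)
        = A t * (A t ^ (i+1) / (i+1)) - ∫ s in Set.Ioc t 1, a s * A s ^ (i + 1) := by
      rw [setIntegral_congr_fun measurableSet_Ioc step3]
      have hint1 : IntegrableOn (fun s => h s * A t) (Set.Ioc t 1) volume :=
        hint_h.integrableOn.mul_const _
      have hint2 : IntegrableOn (fun s => h s * A s) (Set.Ioc t 1) volume := by
        have heq : (fun s => h s * A s) = fun s => a s * A s ^ (i + 1) := by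
          funext s; rw [hh]; ring
        rw [heq]
        exact (integrable_mul_Aint_pow ha ha0 (i + 1)).integrableOn
      have hsub : ∀ s, h s * (A t - A s) = h s * A t - h s * A s := fun s => by ring
      simp_rw [hsub]
      rw [integral_sub hint1 hint2, integral_mul_const, ih t]
      have heq : (fun s => h s * A s) = fun s => a s * A s ^ (i + 1) := by
        funext s; rw [hh]; ring
      rw [heq]; ring
    set X := ∫ r in Set.Ioc t 1, a r * A r ^ (i + 1) with hXdef
    have hX : X = (i + 1 : ℝ) * (A t * (A t ^ (i+1) / (i+1)) - X) :=
      step1.trans (by rw [step2, step4])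
    have hne : (i + 1 : ℝ) ≠ 0 := by positivity
    have e1 : (i + 1 : ℝ) * (A t * (A t ^ (i+1) / (i+1))) = A t ^ (i+2) := by
      field_simp; ring
    have h3 : ((i : ℝ) + 2) * X = A t ^ (i + 2) := by linear_combination hX + e1
    show X = A t ^ (i + 1 + 1) / (((i + 1 : ℕ) : ℝ) + 1)
    rw [eq_div_iff (by positivity : (((i + 1 : ℕ) : ℝ) + 1) ≠ 0)]
    push_cast
    linear_combination h3


lemma gronwall {g : ℝ → ℝ} (ha : Integrable a volume) (ha0 : ∀ r, 0 ≤ a r)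
    {E G : ℝ} (hE : 0 ≤ E) (hG : 0 ≤ G)
    (hgc : ContinuousOn g (Set.Icc 0 1))
    (hg0 : ∀ t ∈ Set.Icc (0:ℝ) 1, 0 ≤ g t)
    (hgG : ∀ t ∈ Set.Icc (0:ℝ) 1, g t ≤ G)
    (hineq : ∀ t ∈ Set.Icc (0:ℝ) 1, g t ≤ E + ∫ r in Set.Ioc t 1, a r * g r)
    (m : ℕ) :
    ∀ t ∈ Set.Icc (0:ℝ) 1,
      g t ≤ E * Real.exp (Aint a 0) + G * (Aint a 0) ^ m / m.factorial := by
  have main : ∀ m : ℕ, ∀ t ∈ Set.Icc (0:ℝ) 1,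
      g t ≤ E * (∑ i ∈ Finset.range m, (Aint a t) ^ i / i.factorial)
        + G * (Aint a t) ^ m / m.factorial := by
    intro m
    induction m with
    | zero => intro t ht; simpa using hgG t ht
    | succ m ihm =>
      intro t ht
      have hIoc_sub : Set.Ioc t 1 ⊆ Set.Icc (0:ℝ) 1 := fun r hr => ⟨le_trans ht.1 hr.1.le, hr.2⟩
      have hgmeas : AEStronglyMeasurable g (volume.restrict (Set.Ioc t 1)) :=
        (hgc.mono hIoc_sub).aestronglyMeasurable measurableSet_Ioc
      have hag_int : IntegrableOn (fun r => a r * g r) (Set.Ioc t 1) volume := by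
        refine Integrable.mono' (ha.integrableOn.const_mul G)
          ((ha.aestronglyMeasurable.restrict).mul hgmeas) ?_
        rw [ae_restrict_iff' measurableSet_Ioc]
        refine Filter.Eventually.of_forall (fun r hr => ?_)
        rw [Real.norm_eq_abs, abs_mul, abs_of_nonneg (ha0 r),
          abs_of_nonneg (hg0 r (hIoc_sub hr))]
        calc a r * g r ≤ a r * G := by
              exact mul_le_mul_of_nonneg_left (hgG r (hIoc_sub hr)) (ha0 r)
          _ = G * a r := by ring
      -- the bound function
      set B : ℝ → ℝ := fun r =>
        E * (∑ i ∈ Finset.range m, (Aint a r) ^ i / i.factorial)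
          + G * (Aint a r) ^ m / m.factorial with hB
      have hfact : ∀ i : ℕ, (0:ℝ) < i.factorial := fun i => by
        exact_mod_cast i.factorial_pos
      have haB_eq : (fun r => a r * B r) = fun r =>
          (∑ i ∈ Finset.range m, (E / i.factorial) * (a r * (Aint a r) ^ i))
            + (G / m.factorial) * (a r * (Aint a r) ^ m) := by
        funext r
        simp only [hB, mul_add, Finset.mul_sum]
        congr 1
        · exact Finset.sum_congr rfl fun i _ => by field_simp
        · field_simp
      have haB_int : Integrable (fun r => a r * B r) volume := by
        rw [haB_eq]
        exact (integrable_finset_sum _ (fun i _ =>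
          ((integrable_mul_Aint_pow ha ha0 i).const_mul _))).add
          ((integrable_mul_Aint_pow ha ha0 m).const_mul _)
      have hmono : ∫ r in Set.Ioc t 1, a r * g r ≤ ∫ r in Set.Ioc t 1, a r * B r := by
        refine setIntegral_mono_on hag_int haB_int.integrableOn measurableSet_Ioc ?_
        intro r hr
        exact mul_le_mul_of_nonneg_left (ihm r (hIoc_sub hr)) (ha0 r)
      have hval : ∫ r in Set.Ioc t 1, a r * B r
          = (∑ i ∈ Finset.range m, (E / i.factorial) * ((Aint a t) ^ (i+1) / (i+1)))
            + (G / m.factorial) * ((Aint a t) ^ (m+1) / (m+1)) := by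
        rw [haB_eq]
        rw [integral_add (integrable_finset_sum _ (fun i _ =>
            ((integrable_mul_Aint_pow ha ha0 i).const_mul _))).integrableOn
          (((integrable_mul_Aint_pow ha ha0 m).const_mul _)).integrableOn,
          integral_finset_sum _ (fun i _ =>
            ((integrable_mul_Aint_pow ha ha0 i).const_mul _).integrableOn),
          integral_const_mul, integral_mul_Aint_pow ha ha0 m t]
        congr 1
        refine Finset.sum_congr rfl (fun i _ => ?_)
        rw [integral_const_mul, integral_mul_Aint_pow ha ha0 i t]
      calc g t ≤ E + ∫ r in Set.Ioc t 1, a r * g r := hineq t ht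
        _ ≤ E + ∫ r in Set.Ioc t 1, a r * B r := by linarith
        _ = E + ((∑ i ∈ Finset.range m, (E / i.factorial) * ((Aint a t) ^ (i+1) / (i+1)))
            + (G / m.factorial) * ((Aint a t) ^ (m+1) / (m+1))) := by rw [hval]
        _ = E * (∑ i ∈ Finset.range (m+1), (Aint a t) ^ i / i.factorial)
            + G * (Aint a t) ^ (m+1) / (m+1).factorial := by
          rw [Finset.sum_range_succ']
          simp only [mul_add, Finset.mul_sum]
          have h1 : ∀ i ∈ Finset.range m,
              (E / i.factorial) * ((Aint a t) ^ (i+1) / (i+1))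
                = E * ((Aint a t) ^ (i+1) / (i+1).factorial) := by
            intro i _
            rw [Nat.factorial_succ]
            push_cast
            rw [div_mul_div_comm, mul_div_assoc']
            ring
          rw [Finset.sum_congr rfl h1]
          have h2 : (G / m.factorial) * ((Aint a t) ^ (m+1) / (m+1))
              = G * (Aint a t) ^ (m+1) / (m+1).factorial := by
            rw [Nat.factorial_succ]
            push_cast
            rw [div_mul_div_comm, mul_comm ((m:ℝ)+1)]
          rw [h2]
          simp only [Nat.factorial_zero, Nat.cast_one]
          ring
  intro t ht
  have hA0 : 0 ≤ Aint a 0 := Aint_nonneg ha0 0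
  have hAt0 : 0 ≤ Aint a t := Aint_nonneg ha0 t
  have hAle : Aint a t ≤ Aint a 0 := Aint_anti ha ha0 ht.1
  calc g t ≤ E * (∑ i ∈ Finset.range m, (Aint a t) ^ i / i.factorial)
        + G * (Aint a t) ^ m / m.factorial := main m t ht
    _ ≤ E * Real.exp (Aint a 0) + G * (Aint a 0) ^ m / m.factorial := by
      have hsum : (∑ i ∈ Finset.range m, (Aint a t) ^ i / i.factorial)
          ≤ Real.exp (Aint a 0) := by
        calc (∑ i ∈ Finset.range m, (Aint a t) ^ i / i.factorial)
            ≤ ∑ i ∈ Finset.range m, (Aint a 0) ^ i / i.factorial := by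
              refine Finset.sum_le_sum (fun i _ => ?_)
              gcongr
          _ ≤ Real.exp (Aint a 0) := Real.sum_le_exp_of_nonneg hA0 m
      have hpow : (Aint a t) ^ m ≤ (Aint a 0) ^ m := pow_le_pow_left₀ hAt0 hAle m
      have t1 : E * (∑ i ∈ Finset.range m, (Aint a t) ^ i / i.factorial)
          ≤ E * Real.exp (Aint a 0) := mul_le_mul_of_nonneg_left hsum hE
      have t2 : G * (Aint a t) ^ m / m.factorial ≤ G * (Aint a 0) ^ m / m.factorial := by
        gcongr
      linarith



noncomputable abbrev μ01 : Measure ℝ := Measure.restrict volume (Set.Icc (0:ℝ) 1)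

lemma cs_bound {V : Type} [NormedAddCommGroup V] [InnerProductSpace ℝ V]
    (f : ℝ → V) (hf : MemLp f 2 μ01) (s : Set ℝ) (hs : MeasurableSet s) :
    ∫ r in s, ‖f r‖ ∂μ01 ≤ ‖hf.toLp f‖ * Real.sqrt ((μ01 s).toReal) := by
  set w : ℝ → ℝ := fun r => ‖f r‖ with hw_def
  have hw : MemLp w 2 μ01 := hf.norm
  set W : Lp ℝ 2 μ01 := hw.toLp w with hW_def
  have hμs : μ01 s ≠ ⊤ := measure_ne_top _ s
  set χ : Lp ℝ 2 μ01 := indicatorConstLp 2 hs hμs (1:ℝ) with hχ_def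
  have hinner : ⟪χ, W⟫ = ∫ x in s, w x ∂μ01 := by
    rw [hχ_def, L2.inner_indicatorConstLp_eq_setIntegral_inner]
    have hcoe : ∀ᵐ x ∂(μ01.restrict s), W x = w x :=
      ae_restrict_of_ae (hw.coeFn_toLp)
    rw [integral_congr_ae ((hcoe.mono (fun x hx => by
      rw [RCLike.inner_apply, hx, starRingEnd_apply, star_one, mul_one])))]
  have hCS : ⟪χ, W⟫ ≤ ‖χ‖ * ‖W‖ := real_inner_le_norm χ W
  have hχnorm : ‖χ‖ = Real.sqrt ((μ01 s).toReal) := by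
    rw [hχ_def, norm_indicatorConstLp (by norm_num) (by norm_num)]
    rw [norm_one, one_mul, ENNReal.toReal_ofNat, Real.sqrt_eq_rpow, measureReal_def]
  have hWnorm : ‖W‖ = ‖hf.toLp f‖ := by
    rw [hW_def, Lp.norm_toLp, Lp.norm_toLp, hw_def, eLpNorm_norm]
  calc ∫ r in s, ‖f r‖ ∂μ01 = ⟪χ, W⟫ := hinner.symm
    _ ≤ ‖χ‖ * ‖W‖ := hCS
    _ = ‖hf.toLp f‖ * Real.sqrt ((μ01 s).toReal) := by rw [hχnorm, hWnorm]; ring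

lemma l1_bound {V : Type} [NormedAddCommGroup V] [InnerProductSpace ℝ V]
    (h : ℝ → V) (hh : MemLp h 2 μ01) {s : Set ℝ} (hs : MeasurableSet s)
    (hsub : s ⊆ Set.Icc (0:ℝ) 1) :
    ∫ r in s, ‖h r‖ ≤ ‖hh.toLp h‖ * Real.sqrt ((volume s).toReal) := by
  have h1 : μ01.restrict s = volume.restrict s := by
    rw [Measure.restrict_restrict hs, Set.inter_eq_self_of_subset_left hsub]
  have h2 : μ01 s = volume s := by
    rw [Measure.restrict_apply hs, Set.inter_eq_self_of_subset_left hsub]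
  have hcs := cs_bound h hh s hs
  rw [show (∫ r in s, ‖h r‖ ∂μ01) = ∫ r in s, ‖h r‖ from by rw [h1]] at hcs
  rwa [h2] at hcs

lemma weak_uniform_bound {V : Type} [NormedAddCommGroup V] [InnerProductSpace ℝ V]
    [CompleteSpace V]
    (ν : ℝ → V) (νseq : ℕ → ℝ → V)
    (hν : MemLp ν 2 μ01) (hνseq : ∀ k, MemLp (νseq k) 2 μ01)
    (hweak : ∀ η : ℝ → V, MemLp η 2 μ01 →
      Tendsto (fun k => ∫ t in Set.Icc (0:ℝ) 1, ⟪νseq k t, η t⟫) atTop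
        (nhds (∫ t in Set.Icc (0:ℝ) 1, ⟪ν t, η t⟫))) :
    ∃ B : ℝ, 0 ≤ B ∧ ∀ k, ‖(hνseq k).toLp (νseq k)‖ ≤ B := by
  set T : ℕ → (Lp V 2 μ01) →L[ℝ] ℝ := fun k => innerSL ℝ ((hνseq k).toLp (νseq k)) with hT
  have hpt : ∀ ξ : Lp V 2 μ01, ∃ c : ℝ, ∀ k, ‖T k ξ‖ ≤ c := by
    intro ξ
    have hmem : MemLp (fun t => ξ t) 2 μ01 := Lp.memLp ξ
    have heq : ∀ k, T k ξ = ∫ t in Set.Icc (0:ℝ) 1, ⟪νseq k t, ξ t⟫ := by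
      intro k
      rw [hT]
      simp only [innerSL_apply_apply]
      rw [L2.inner_def]
      refine integral_congr_ae ?_
      filter_upwards [(hνseq k).coeFn_toLp] with t ht
      rw [ht]
    have htend : Tendsto (fun k => T k ξ) atTop
        (nhds (∫ t in Set.Icc (0:ℝ) 1, ⟪ν t, ξ t⟫)) := by
      simp_rw [heq]
      exact hweak _ hmem
    have hbdd := (htend.norm).bddAbove_range
    obtain ⟨c, hc⟩ := hbdd
    exact ⟨c, fun k => hc ⟨k, rfl⟩⟩
  obtain ⟨B0, hB0⟩ := banach_steinhaus hpt
  refine ⟨max B0 0, le_max_right _ _, fun k => ?_⟩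
  have : ‖T k‖ = ‖(hνseq k).toLp (νseq k)‖ := by
    rw [hT]; exact innerSL_apply_norm (𝕜 := ℝ) _
  rw [← this]
  exact le_max_of_le_left (hB0 k)


variable {n : ℕ} {V : Type} [NormedAddCommGroup V] [InnerProductSpace ℝ V] [CompleteSpace V]

local notation "E" => EuclideanSpace ℝ (Fin n)

lemma coord_le_norm (x : EuclideanSpace ℝ (Fin n)) (i : Fin n) : |x i| ≤ ‖x‖ := by
  rw [EuclideanSpace.norm_eq]
  rw [← Real.sqrt_sq_eq_abs]
  apply Real.sqrt_le_sqrt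
  have : |x i| ^ 2 ≤ ∑ j, ‖x j‖ ^ 2 := by
    have := Finset.single_le_sum (f := fun j => ‖x j‖ ^ 2)
      (fun j _ => by positivity) (Finset.mem_univ i)
    simpa [Real.norm_eq_abs, sq_abs] using this
  simpa [sq_abs] using this

section jstuff

variable (j : V →ₗ[ℝ] (EuclideanSpace ℝ (Fin n) → EuclideanSpace ℝ (Fin n)))
  (C : ℝ)

lemma jcont (hC : 0 ≤ C)
    (hjbd : ∀ (v : V) (x : E), ‖j v x‖ ≤ C * ‖v‖)
    (hjlip : ∀ (v : V) (x y : E), ‖j v x - j v y‖ ≤ C * ‖v‖ * ‖x - y‖) :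
    Continuous (fun p : V × EuclideanSpace ℝ (Fin n) => j p.1 p.2) := by
  rw [continuous_iff_continuousAt]
  rintro ⟨v₀, y₀⟩
  rw [ContinuousAt, tendsto_iff_norm_sub_tendsto_zero]
  have hbd : ∀ p : V × EuclideanSpace ℝ (Fin n),
      ‖j p.1 p.2 - j v₀ y₀‖ ≤ C * ‖p.1 - v₀‖ + C * ‖v₀‖ * ‖p.2 - y₀‖ := by
    rintro ⟨v, y⟩
    calc ‖j v y - j v₀ y₀‖ = ‖(j v y - j v₀ y) + (j v₀ y - j v₀ y₀)‖ := by
          rw [sub_add_sub_cancel]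
      _ ≤ ‖j v y - j v₀ y‖ + ‖j v₀ y - j v₀ y₀‖ := norm_add_le _ _
      _ ≤ C * ‖v - v₀‖ + C * ‖v₀‖ * ‖y - y₀‖ := by
          have h1 : j v y - j v₀ y = j (v - v₀) y := by rw [j.map_sub]; rfl
          gcongr
          · rw [h1]; exact hjbd _ _
          · exact hjlip _ _ _
  have hb0 : Tendsto (fun p : V × EuclideanSpace ℝ (Fin n) =>
      C * ‖p.1 - v₀‖ + C * ‖v₀‖ * ‖p.2 - y₀‖) (nhds (v₀, y₀)) (nhds 0) := by
    have : Continuous (fun p : V × EuclideanSpace ℝ (Fin n) =>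
        C * ‖p.1 - v₀‖ + C * ‖v₀‖ * ‖p.2 - y₀‖) := by fun_prop
    have h := this.tendsto (v₀, y₀)
    simpa using h
  exact squeeze_zero_norm (fun p => by simpa using hbd p) hb0

/-- `v ↦ j v y` as a linear map. -/
noncomputable def jlin (y : E) : V →ₗ[ℝ] EuclideanSpace ℝ (Fin n) where
  toFun v := j v y
  map_add' u v := congrFun (j.map_add u v) y
  map_smul' c v := congrFun (j.map_smul c v) y

@[simp] lemma jlin_apply (y : E) (v : V) : jlin j y v = j v y := rfl

/-- The Riesz representer of the `i`-th coordinate of `v ↦ j v y`. -/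
noncomputable def Krep (hC : 0 ≤ C)
    (hjbd : ∀ (v : V) (x : E), ‖j v x‖ ≤ C * ‖v‖)
    (i : Fin n) (y : E) : V :=
  (InnerProductSpace.toDual ℝ V).symm
    (LinearMap.mkContinuous ((EuclideanSpace.projₗ i).comp (jlin j y)) C
      (fun v => by
        refine le_trans ?_ (hjbd v y)
        simpa [Real.norm_eq_abs] using coord_le_norm (j v y) i))

lemma Krep_inner (hC : 0 ≤ C)
    (hjbd : ∀ (v : V) (x : E), ‖j v x‖ ≤ C * ‖v‖)
    (i : Fin n) (y : E) (v : V) :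
    ⟪v, Krep j C hC hjbd i y⟫ = j v y i := by
  rw [real_inner_comm, Krep, InnerProductSpace.toDual_symm_apply]
  rfl

lemma Krep_norm_le (hC : 0 ≤ C)
    (hjbd : ∀ (v : V) (x : E), ‖j v x‖ ≤ C * ‖v‖)
    (i : Fin n) (y : E) : ‖Krep j C hC hjbd i y‖ ≤ C := by
  rw [Krep, LinearIsometryEquiv.norm_map]
  exact LinearMap.mkContinuous_norm_le _ hC _

lemma Krep_continuous (hC : 0 ≤ C)
    (hjbd : ∀ (v : V) (x : E), ‖j v x‖ ≤ C * ‖v‖)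
    (hjlip : ∀ (v : V) (x y : E), ‖j v x - j v y‖ ≤ C * ‖v‖ * ‖x - y‖)
    (i : Fin n) : Continuous (fun y : E => Krep j C hC hjbd i y) := by
  have hlip : ∀ y y' : E, ‖Krep j C hC hjbd i y - Krep j C hC hjbd i y'‖ ≤ C * ‖y - y'‖ := by
    intro y y'
    set z := Krep j C hC hjbd i y - Krep j C hC hjbd i y' with hz
    have hip : ⟪z, z⟫ = j z y i - j z y' i := by
      rw [hz]
      conv_lhs => rw [inner_sub_right]
      rw [Krep_inner, Krep_inner]
    have h1 : ‖z‖ ^ 2 = j z y i - j z y' i := by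
      rw [← hip, real_inner_self_eq_norm_sq]
    have h2 : ‖z‖ ^ 2 ≤ C * ‖z‖ * ‖y - y'‖ := by
      rw [h1]
      calc j z y i - j z y' i ≤ |j z y i - j z y' i| := le_abs_self _
        _ = |(j z y - j z y') i| := by norm_num
        _ ≤ ‖j z y - j z y'‖ := coord_le_norm _ i
        _ ≤ C * ‖z‖ * ‖y - y'‖ := hjlip _ _ _
    rcases eq_or_lt_of_le (norm_nonneg z) with h0 | h0
    · rw [← h0]; positivity
    · nlinarith [h2]
  have : LipschitzWith C.toNNReal (fun y : E => Krep j C hC hjbd i y) := by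
    refine LipschitzWith.of_dist_le_mul (fun y y' => ?_)
    rw [dist_eq_norm, dist_eq_norm]
    calc ‖Krep j C hC hjbd i y - Krep j C hC hjbd i y'‖ ≤ C * ‖y - y'‖ := hlip y y'
      _ = (C.toNNReal : ℝ) * ‖y - y'‖ := by rw [Real.coe_toNNReal C hC]
  exact this.continuous

end jstuff


section flows

variable (j : V →ₗ[ℝ] (EuclideanSpace ℝ (Fin n) → EuclideanSpace ℝ (Fin n))) (C : ℝ)

lemma path_integrableOn (hC : 0 ≤ C)
    (hjbd : ∀ (v : V) (x : E), ‖j v x‖ ≤ C * ‖v‖)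
    (hjlip : ∀ (v : V) (x y : E), ‖j v x - j v y‖ ≤ C * ‖v‖ * ‖x - y‖)
    {ν : ℝ → V} (hν : MemLp ν 2 μ01)
    {w : ℝ → E} (hw : ContinuousOn w (Set.Icc 0 1)) :
    IntegrableOn (fun r => j (ν r) (w r)) (Set.Icc (0:ℝ) 1) volume := by
  have hmeas : AEStronglyMeasurable (fun r => j (ν r) (w r)) μ01 := by
    have h1 : AEStronglyMeasurable (fun r => (ν r, w r)) μ01 :=
      hν.aestronglyMeasurable.prodMk (hw.aestronglyMeasurable measurableSet_Icc)
    exact (jcont j C hC hjbd hjlip).comp_aestronglyMeasurable h1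
  have hbound : Integrable (fun r => C * ‖ν r‖) μ01 :=
    ((hν.integrable one_le_two).norm).const_mul C
  refine Integrable.mono' hbound hmeas ?_
  exact Filter.Eventually.of_forall (fun r => hjbd (ν r) (w r))

lemma flow_repr
    {ν : ℝ → V} {φ : ℝ → ℝ → E → E} (x : E)
    (hφ : ∀ s ∈ Set.Icc (0:ℝ) 1, ∀ x, ∀ t ∈ Set.Icc (0:ℝ) 1,
      φ s t x = x + ∫ r in s..t, j (ν r) (φ s r x))
    {t : ℝ} (ht : t ∈ Set.Icc (0:ℝ) 1) :
    φ 1 t x = x - ∫ r in Set.Ioc t 1, j (ν r) (φ 1 r x) := by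
  have h := hφ 1 (by norm_num) x t ht
  rw [h, intervalIntegral.integral_symm, intervalIntegral.integral_of_le ht.2,
    sub_eq_add_neg]

end flows

/-- From pointwise convergence and a `√`-Hölder modulus, uniform smallness. -/
lemma unif_small (ε : ℕ → ℝ → EuclideanSpace ℝ (Fin n)) (L δ : ℝ) (hL : 0 ≤ L) (hδ : 0 < δ)
    (hpt : ∀ t ∈ Set.Icc (0:ℝ) 1, Tendsto (fun k => ε k t) atTop (nhds 0))
    (hec : ∀ k, ∀ t ∈ Set.Icc (0:ℝ) 1, ∀ t' ∈ Set.Icc (0:ℝ) 1, t ≤ t' →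
      ‖ε k t - ε k t'‖ ≤ L * Real.sqrt (t' - t)) :
    ∀ᶠ k in atTop, ∀ t ∈ Set.Icc (0:ℝ) 1, ‖ε k t‖ ≤ δ := by
  -- choose a fine grid
  have t1 : Tendsto (fun N : ℕ => (1:ℝ)/N) atTop (nhds 0) := tendsto_one_div_atTop_nhds_zero_nat
  have t2 : Tendsto (fun N : ℕ => L * Real.sqrt ((1:ℝ)/N)) atTop (nhds 0) := by
    have h3 : Tendsto (fun N : ℕ => Real.sqrt ((1:ℝ)/N)) atTop (nhds 0) := by
      have := (Real.continuous_sqrt.tendsto' 0 0 (by simp)).comp t1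
      exact this
    simpa using h3.const_mul L
  obtain ⟨N, hN⟩ := ((t2.eventually_lt_const (half_pos hδ)).and
    (eventually_ge_atTop 1)).exists
  obtain ⟨hN2, hN1⟩ := hN
  have hNpos : (0:ℝ) < N := by exact_mod_cast hN1
  -- grid points
  have hgrid : ∀ᶠ k in atTop, ∀ i ∈ Finset.range (N+1), ‖ε k ((i:ℝ)/N)‖ ≤ δ/2 := by
    rw [Filter.eventually_all_finset]
    intro i hi
    have himem : ((i:ℝ)/N) ∈ Set.Icc (0:ℝ) 1 := by
      constructor
      · positivity
      · rw [div_le_one hNpos]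
        have : i ≤ N := by
          have := Finset.mem_range.mp hi
          omega
        exact_mod_cast this
    have := (hpt _ himem).norm
    simp only [norm_zero] at this
    exact (this.eventually_lt_const (half_pos hδ)).mono (fun k hk => hk.le)
  refine hgrid.mono (fun k hk t ht => ?_)
  -- find the grid point below t
  set i := ⌊t * N⌋₊ with hi
  have hiN : i ∈ Finset.range (N+1) := by
    rw [Finset.mem_range]
    have h1 : t * N ≤ N := by
      nlinarith [ht.2, hNpos]
    have : i ≤ N := by
      rw [hi]
      exact_mod_cast Nat.floor_le_of_le h1
    omega
  have hfloor_le : ((i:ℝ)/N) ≤ t := by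
    rw [div_le_iff₀ hNpos]
    exact Nat.floor_le (by nlinarith [ht.1, hNpos.le] : 0 ≤ t * N)
  have hfloor_gt : t - (i:ℝ)/N ≤ 1/N := by
    have h2 : t * N < i + 1 := Nat.lt_floor_add_one _
    have hcomb : (1:ℝ)/N + (i:ℝ)/N = ((i:ℝ)+1)/N := by ring
    rw [sub_le_iff_le_add, hcomb, le_div_iff₀ hNpos]
    linarith
  have himem : ((i:ℝ)/N) ∈ Set.Icc (0:ℝ) 1 := by
    constructor
    · positivity
    · rw [div_le_one hNpos]
      have : i ≤ N := by simpa [Finset.mem_range] using Nat.lt_succ_iff.mp (Finset.mem_range.mp hiN)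
      exact_mod_cast this
  have hdiff : ‖ε k ((i:ℝ)/N) - ε k t‖ ≤ L * Real.sqrt (t - (i:ℝ)/N) :=
    hec k _ himem t ht hfloor_le
  have hsq : Real.sqrt (t - (i:ℝ)/N) ≤ Real.sqrt (1/N) := Real.sqrt_le_sqrt hfloor_gt
  calc ‖ε k t‖ = ‖ε k ((i:ℝ)/N) - (ε k ((i:ℝ)/N) - ε k t)‖ := by rw [sub_sub_cancel]
    _ ≤ ‖ε k ((i:ℝ)/N)‖ + ‖ε k ((i:ℝ)/N) - ε k t‖ := norm_sub_le _ _
    _ ≤ δ/2 + L * Real.sqrt (1/N) := by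
        refine add_le_add (hk i hiN) (le_trans hdiff ?_)
        exact mul_le_mul_of_nonneg_left hsq hL
    _ ≤ δ/2 + δ/2 := by linarith
    _ = δ := by ring


lemma integrableOn_of_mu01 {W : Type*} [NormedAddCommGroup W] {h : ℝ → W}
    (hint : Integrable h μ01) {s : Set ℝ} (hs : MeasurableSet s)
    (hsub : s ⊆ Set.Icc (0:ℝ) 1) : IntegrableOn h s volume := by
  have h2 : μ01.restrict s = volume.restrict s := by
    rw [Measure.restrict_restrict hs, Set.inter_eq_self_of_subset_left hsub]
  have := hint.restrict (s := s)
  rwa [h2] at this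

section flows2

variable (j : V →ₗ[ℝ] (EuclideanSpace ℝ (Fin n) → EuclideanSpace ℝ (Fin n))) (C : ℝ)

lemma flow_dist (hC : 0 ≤ C)
    (hjbd : ∀ (v : V) (x : E), ‖j v x‖ ≤ C * ‖v‖)
    (hjlip : ∀ (v : V) (x y : E), ‖j v x - j v y‖ ≤ C * ‖v‖ * ‖x - y‖)
    {ν : ℝ → V} (hν : MemLp ν 2 μ01) {φ : ℝ → ℝ → E → E}
    (hφcont : ∀ s ∈ Set.Icc (0:ℝ) 1, ∀ x, ContinuousOn (fun t => φ s t x) (Set.Icc 0 1))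
    (hφ : ∀ s ∈ Set.Icc (0:ℝ) 1, ∀ x, ∀ t ∈ Set.Icc (0:ℝ) 1,
      φ s t x = x + ∫ r in s..t, j (ν r) (φ s r x))
    (x : E) {t : ℝ} (ht : t ∈ Set.Icc (0:ℝ) 1) :
    ‖φ 1 t x - x‖ ≤ C * ‖hν.toLp ν‖ := by
  have hrepr := flow_repr j x hφ ht
  have hIoc_sub : Set.Ioc t 1 ⊆ Set.Icc (0:ℝ) 1 := fun r hr => ⟨le_trans ht.1 hr.1.le, hr.2⟩
  have hFint : IntegrableOn (fun r => j (ν r) (φ 1 r x)) (Set.Ioc t 1) volume :=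
    (path_integrableOn j C hC hjbd hjlip hν (hφcont 1 (by norm_num) x)).mono_set hIoc_sub
  have hνnorm : IntegrableOn (fun r => C * ‖ν r‖) (Set.Ioc t 1) volume :=
    integrableOn_of_mu01 (((hν.integrable one_le_two).norm).const_mul C)
      measurableSet_Ioc hIoc_sub
  calc ‖φ 1 t x - x‖ = ‖∫ r in Set.Ioc t 1, j (ν r) (φ 1 r x)‖ := by
        rw [hrepr, sub_sub_cancel_left, norm_neg]
    _ ≤ ∫ r in Set.Ioc t 1, ‖j (ν r) (φ 1 r x)‖ := norm_integral_le_integral_norm _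
    _ ≤ ∫ r in Set.Ioc t 1, C * ‖ν r‖ := by
        refine setIntegral_mono_on hFint.norm hνnorm measurableSet_Ioc ?_
        intro r _
        exact hjbd _ _
    _ = C * ∫ r in Set.Ioc t 1, ‖ν r‖ := integral_const_mul _ _
    _ ≤ C * (‖hν.toLp ν‖ * Real.sqrt ((volume (Set.Ioc t 1)).toReal)) := by
        refine mul_le_mul_of_nonneg_left ?_ hC
        exact l1_bound ν hν measurableSet_Ioc hIoc_sub
    _ ≤ C * (‖hν.toLp ν‖ * 1) := by
        refine mul_le_mul_of_nonneg_left (mul_le_mul_of_nonneg_left ?_ (norm_nonneg _)) hC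
        rw [Real.volume_Ioc]
        rcases le_or_gt t 1 with h | h
        · rw [ENNReal.toReal_ofReal (by linarith)]
          exact Real.sqrt_le_one.mpr (by linarith [ht.1])
        · rw [ENNReal.ofReal_of_nonpos (by linarith)]
          simp
    _ = C * ‖hν.toLp ν‖ := by ring

lemma flow_cont (hC : 0 ≤ C)
    (hjbd : ∀ (v : V) (x : E), ‖j v x‖ ≤ C * ‖v‖)
    (hjlip : ∀ (v : V) (x y : E), ‖j v x - j v y‖ ≤ C * ‖v‖ * ‖x - y‖)
    {ν : ℝ → V} (hν : MemLp ν 2 μ01) {φ : ℝ → ℝ → E → E}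
    (hφcont : ∀ s ∈ Set.Icc (0:ℝ) 1, ∀ x, ContinuousOn (fun t => φ s t x) (Set.Icc 0 1))
    (hφ : ∀ s ∈ Set.Icc (0:ℝ) 1, ∀ x, ∀ t ∈ Set.Icc (0:ℝ) 1,
      φ s t x = x + ∫ r in s..t, j (ν r) (φ s r x)) :
    Continuous (fun x : E => φ 1 0 x) := by
  set a : ℝ → ℝ := Set.indicator (Set.Icc (0:ℝ) 1) (fun r => C * ‖ν r‖) with ha_def
  have ha_int : Integrable a volume := by
    rw [ha_def]
    exact IntegrableOn.integrable_indicator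
      (((hν.integrable one_le_two).norm).const_mul C) measurableSet_Icc
  have ha0 : ∀ r, 0 ≤ a r := by
    intro r
    rw [ha_def]
    exact Set.indicator_nonneg (fun r _ => by positivity) r
  set D := C * ‖hν.toLp ν‖ with hD_def
  have hD0 : 0 ≤ D := by positivity
  have key : ∀ x y : E, ‖φ 1 0 x - φ 1 0 y‖ ≤ ‖x - y‖ * Real.exp (Aint a 0) := by
    intro x y
    set g : ℝ → ℝ := fun t => ‖φ 1 t x - φ 1 t y‖ with hg_def
    have hgc : ContinuousOn g (Set.Icc 0 1) :=
      ((hφcont 1 (by norm_num) x).sub (hφcont 1 (by norm_num) y)).norm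
    have hg0 : ∀ t ∈ Set.Icc (0:ℝ) 1, 0 ≤ g t := fun t _ => norm_nonneg _
    set G := ‖x - y‖ + 2 * D with hG_def
    have hG0 : 0 ≤ G := by positivity
    have hgG : ∀ t ∈ Set.Icc (0:ℝ) 1, g t ≤ G := by
      intro t ht
      have h1 := flow_dist j C hC hjbd hjlip hν hφcont hφ x ht
      have h2 := flow_dist j C hC hjbd hjlip hν hφcont hφ y ht
      calc g t = ‖(φ 1 t x - x) - (φ 1 t y - y) + (x - y)‖ := by
            show ‖φ 1 t x - φ 1 t y‖ = _
            congr 1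
            abel
        _ ≤ ‖φ 1 t x - x‖ + ‖φ 1 t y - y‖ + ‖x - y‖ := by
            refine le_trans (norm_add_le _ _) ?_
            gcongr
            exact norm_sub_le _ _
        _ ≤ G := by rw [hG_def, hD_def]; linarith
    have hineq : ∀ t ∈ Set.Icc (0:ℝ) 1, g t ≤ ‖x - y‖ + ∫ r in Set.Ioc t 1, a r * g r := by
      intro t ht
      have hIoc_sub : Set.Ioc t 1 ⊆ Set.Icc (0:ℝ) 1 := fun r hr => ⟨le_trans ht.1 hr.1.le, hr.2⟩
      have hFx : IntegrableOn (fun r => j (ν r) (φ 1 r x)) (Set.Ioc t 1) volume :=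
        (path_integrableOn j C hC hjbd hjlip hν (hφcont 1 (by norm_num) x)).mono_set hIoc_sub
      have hFy : IntegrableOn (fun r => j (ν r) (φ 1 r y)) (Set.Ioc t 1) volume :=
        (path_integrableOn j C hC hjbd hjlip hν (hφcont 1 (by norm_num) y)).mono_set hIoc_sub
      have hag : IntegrableOn (fun r => a r * g r) (Set.Ioc t 1) volume := by
        refine Integrable.mono' (ha_int.integrableOn.const_mul G)
          ((ha_int.aestronglyMeasurable.restrict).mul
            (((hgc.mono hIoc_sub)).aestronglyMeasurable measurableSet_Ioc)) ?_
        rw [ae_restrict_iff' measurableSet_Ioc]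
        refine Filter.Eventually.of_forall (fun r hr => ?_)
        rw [Real.norm_eq_abs, abs_mul, abs_of_nonneg (ha0 r), abs_of_nonneg (hg0 r (hIoc_sub hr))]
        calc a r * g r ≤ a r * G := mul_le_mul_of_nonneg_left (hgG r (hIoc_sub hr)) (ha0 r)
          _ = G * a r := by ring
      have hd : φ 1 t x - φ 1 t y
          = (x - y) - ∫ r in Set.Ioc t 1, (j (ν r) (φ 1 r x) - j (ν r) (φ 1 r y)) := by
        rw [flow_repr j x hφ ht, flow_repr j y hφ ht, integral_sub hFx hFy]
        abel
      calc g t = ‖(x - y) - ∫ r in Set.Ioc t 1, (j (ν r) (φ 1 r x) - j (ν r) (φ 1 r y))‖ := by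
            show ‖φ 1 t x - φ 1 t y‖ = _
            rw [hd]
        _ ≤ ‖x - y‖ + ‖∫ r in Set.Ioc t 1, (j (ν r) (φ 1 r x) - j (ν r) (φ 1 r y))‖ :=
            norm_sub_le _ _
        _ ≤ ‖x - y‖ + ∫ r in Set.Ioc t 1, ‖j (ν r) (φ 1 r x) - j (ν r) (φ 1 r y)‖ := by
            gcongr
            exact norm_integral_le_integral_norm _
        _ ≤ ‖x - y‖ + ∫ r in Set.Ioc t 1, a r * g r := by
            refine add_le_add le_rfl ?_
            refine setIntegral_mono_on (hFx.sub hFy).norm hag measurableSet_Ioc ?_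
            intro r hr
            have : a r = C * ‖ν r‖ := by
              rw [ha_def, Set.indicator_of_mem (hIoc_sub hr)]
            rw [this]
            exact hjlip (ν r) _ _
    have hbnd : ∀ m : ℕ, g 0 ≤ ‖x - y‖ * Real.exp (Aint a 0) + G * (Aint a 0) ^ m / m.factorial :=
      fun m => gronwall ha_int ha0 (norm_nonneg _) hG0 hgc hg0 hgG hineq m 0
        (by norm_num)
    have htend : Tendsto (fun m : ℕ => ‖x - y‖ * Real.exp (Aint a 0)
        + G * (Aint a 0) ^ m / m.factorial) atTop
        (nhds (‖x - y‖ * Real.exp (Aint a 0))) := by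
      have h1 : Tendsto (fun m : ℕ => (Aint a 0) ^ m / m.factorial) atTop (nhds 0) :=
        FloorSemiring.tendsto_pow_div_factorial_atTop (Aint a 0)
      have h2 := (h1.const_mul G).const_add (‖x - y‖ * Real.exp (Aint a 0))
      simpa [mul_div_assoc] using h2
    exact ge_of_tendsto htend (Filter.Eventually.of_forall hbnd)
  have hlip : LipschitzWith (Real.exp (Aint a 0)).toNNReal (fun x : E => φ 1 0 x) := by
    refine LipschitzWith.of_dist_le_mul (fun x y => ?_)
    rw [dist_eq_norm, dist_eq_norm, Real.coe_toNNReal _ (Real.exp_pos _).le]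
    calc ‖φ 1 0 x - φ 1 0 y‖ ≤ ‖x - y‖ * Real.exp (Aint a 0) := key x y
      _ = Real.exp (Aint a 0) * ‖x - y‖ := by ring
  exact hlip.continuous

end flows2

section main

variable {n : ℕ} {V : Type} [NormedAddCommGroup V] [InnerProductSpace ℝ V] [CompleteSpace V]

lemma flows_converge
    (j : V →ₗ[ℝ] (EuclideanSpace ℝ (Fin n) → EuclideanSpace ℝ (Fin n)))
    (C : ℝ) (hC : 0 ≤ C)
    (hjbd : ∀ (v : V) (x : EuclideanSpace ℝ (Fin n)), ‖j v x‖ ≤ C * ‖v‖)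
    (hjlip : ∀ (v : V) (x y : EuclideanSpace ℝ (Fin n)),
      ‖j v x - j v y‖ ≤ C * ‖v‖ * ‖x - y‖)
    (ν : ℝ → V) (νseq : ℕ → ℝ → V)
    (hν : MemLp ν 2 μ01) (hνseq : ∀ k, MemLp (νseq k) 2 μ01)
    (hweak : ∀ η : ℝ → V, MemLp η 2 μ01 →
      Tendsto (fun k => ∫ t in Set.Icc (0:ℝ) 1, ⟪νseq k t, η t⟫) atTop
        (nhds (∫ t in Set.Icc (0:ℝ) 1, ⟪ν t, η t⟫)))
    (φ : ℝ → ℝ → EuclideanSpace ℝ (Fin n) → EuclideanSpace ℝ (Fin n))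
    (φseq : ℕ → ℝ → ℝ → EuclideanSpace ℝ (Fin n) → EuclideanSpace ℝ (Fin n))
    (hφcont : ∀ s ∈ Set.Icc (0:ℝ) 1, ∀ x, ContinuousOn (fun t => φ s t x) (Set.Icc (0:ℝ) 1))
    (hφ : ∀ s ∈ Set.Icc (0:ℝ) 1, ∀ x, ∀ t ∈ Set.Icc (0:ℝ) 1,
      φ s t x = x + ∫ r in s..t, j (ν r) (φ s r x))
    (hφseqcont : ∀ k, ∀ s ∈ Set.Icc (0:ℝ) 1, ∀ x,
      ContinuousOn (fun t => φseq k s t x) (Set.Icc (0:ℝ) 1))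
    (hφseq : ∀ k, ∀ s ∈ Set.Icc (0:ℝ) 1, ∀ x, ∀ t ∈ Set.Icc (0:ℝ) 1,
      φseq k s t x = x + ∫ r in s..t, j (νseq k r) (φseq k s r x))
    (x : EuclideanSpace ℝ (Fin n)) :
    Tendsto (fun k => φseq k 1 0 x) atTop (nhds (φ 1 0 x)) := by
  classical
  obtain ⟨B, hB0, hB⟩ := weak_uniform_bound ν νseq hν hνseq hweak
  set X := hν.toLp ν with hX_def
  set f : ℝ → EuclideanSpace ℝ (Fin n) := fun t => φ 1 t x with hf_def
  have h1mem : (1:ℝ) ∈ Set.Icc (0:ℝ) 1 := by norm_num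
  have hfc : ContinuousOn f (Set.Icc 0 1) := hφcont 1 h1mem x
  have hfkc : ∀ k, ContinuousOn (fun t => φseq k 1 t x) (Set.Icc 0 1) :=
    fun k => hφseqcont k 1 h1mem x
  set G := C * B + C * ‖X‖ with hG_def
  have hG0 : 0 ≤ G := by positivity
  -- integrability of the various integrands
  have hFint : IntegrableOn (fun r => j (ν r) (f r)) (Set.Icc (0:ℝ) 1) volume :=
    path_integrableOn j C hC hjbd hjlip hν hfc
  have hGkint : ∀ k, IntegrableOn (fun r => j (νseq k r) (f r)) (Set.Icc (0:ℝ) 1) volume :=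
    fun k => path_integrableOn j C hC hjbd hjlip (hνseq k) hfc
  have hFkint : ∀ k,
      IntegrableOn (fun r => j (νseq k r) (φseq k 1 r x)) (Set.Icc (0:ℝ) 1) volume :=
    fun k => path_integrableOn j C hC hjbd hjlip (hνseq k) (hfkc k)
  -- the coefficient functions
  set a : ℕ → ℝ → ℝ :=
    fun k => Set.indicator (Set.Icc (0:ℝ) 1) (fun r => C * ‖νseq k r‖) with ha_def
  have ha_int : ∀ k, Integrable (a k) volume := fun k =>
    IntegrableOn.integrable_indicator
      ((((hνseq k).integrable one_le_two).norm).const_mul C) measurableSet_Icc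
  have ha0 : ∀ k r, 0 ≤ a k r := fun k r =>
    Set.indicator_nonneg (fun r _ => by positivity) r
  -- uniform bound on the `Aint` of the coefficients
  have hAk : ∀ k, Aint (a k) 0 ≤ C * B := by
    intro k
    have h1 : Aint (a k) 0 = C * ∫ r in Set.Ioc (0:ℝ) 1, ‖νseq k r‖ := by
      rw [Aint, ha_def, setIntegral_indicator measurableSet_Icc,
        Set.inter_eq_self_of_subset_left Set.Ioc_subset_Icc_self, integral_const_mul]
    rw [h1]
    have h2 : ∫ r in Set.Ioc (0:ℝ) 1, ‖νseq k r‖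
        ≤ ‖(hνseq k).toLp (νseq k)‖ * Real.sqrt ((volume (Set.Ioc (0:ℝ) 1)).toReal) :=
      l1_bound _ (hνseq k) measurableSet_Ioc Set.Ioc_subset_Icc_self
    have h3 : Real.sqrt ((volume (Set.Ioc (0:ℝ) 1)).toReal) = 1 := by
      rw [Real.volume_Ioc]
      norm_num
    rw [h3, mul_one] at h2
    calc C * ∫ r in Set.Ioc (0:ℝ) 1, ‖νseq k r‖ ≤ C * ‖(hνseq k).toLp (νseq k)‖ :=
          mul_le_mul_of_nonneg_left h2 hC
      _ ≤ C * B := mul_le_mul_of_nonneg_left (hB k) hC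
  -- the epsilon functions
  set εf : ℕ → ℝ → EuclideanSpace ℝ (Fin n) :=
    fun k t => ∫ r in Set.Ioc t 1, (j (ν r) (f r) - j (νseq k r) (f r)) with hεf_def
  set L := C * (‖X‖ + B) with hL_def
  have hL0 : 0 ≤ L := by positivity
  -- equicontinuity of εf
  have hεec : ∀ k, ∀ t ∈ Set.Icc (0:ℝ) 1, ∀ t' ∈ Set.Icc (0:ℝ) 1, t ≤ t' →
      ‖εf k t - εf k t'‖ ≤ L * Real.sqrt (t' - t) := by
    intro k t ht t' ht' htt'
    have hsub1 : Set.Ioc t 1 ⊆ Set.Icc (0:ℝ) 1 := fun r hr => ⟨le_trans ht.1 hr.1.le, hr.2⟩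
    have hsub2 : Set.Ioc t t' ⊆ Set.Icc (0:ℝ) 1 :=
      fun r hr => ⟨le_trans ht.1 hr.1.le, le_trans hr.2 ht'.2⟩
    have hDint : IntegrableOn (fun r => j (ν r) (f r) - j (νseq k r) (f r))
        (Set.Icc (0:ℝ) 1) volume := hFint.sub (hGkint k)
    have hsplit : εf k t = (∫ r in Set.Ioc t t', (j (ν r) (f r) - j (νseq k r) (f r)))
        + εf k t' := by
      rw [hεf_def]
      simp only
      rw [← Set.Ioc_union_Ioc_eq_Ioc htt' ht'.2,
        setIntegral_union (Set.Ioc_disjoint_Ioc_of_le le_rfl) measurableSet_Ioc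
          (hDint.mono_set hsub2) (hDint.mono_set (fun r hr => ⟨le_trans ht'.1 hr.1.le, hr.2⟩))]
    have hd : εf k t - εf k t' = ∫ r in Set.Ioc t t', (j (ν r) (f r) - j (νseq k r) (f r)) := by
      rw [hsplit, add_sub_cancel_right]
    rw [hd]
    have hmemsub : MemLp (fun r => ν r - νseq k r) 2 μ01 := hν.sub (hνseq k)
    calc ‖∫ r in Set.Ioc t t', (j (ν r) (f r) - j (νseq k r) (f r))‖
        ≤ ∫ r in Set.Ioc t t', ‖j (ν r) (f r) - j (νseq k r) (f r)‖ :=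
          norm_integral_le_integral_norm _
      _ ≤ ∫ r in Set.Ioc t t', C * ‖ν r - νseq k r‖ := by
          refine setIntegral_mono_on ((hDint.mono_set hsub2).norm)
            (integrableOn_of_mu01 ((hmemsub.integrable one_le_two).norm.const_mul C)
              measurableSet_Ioc hsub2) measurableSet_Ioc ?_
          intro r _
          have heq : j (ν r) (f r) - j (νseq k r) (f r) = j (ν r - νseq k r) (f r) := by
            rw [j.map_sub]; rfl
          rw [heq]
          exact hjbd _ _
      _ = C * ∫ r in Set.Ioc t t', ‖ν r - νseq k r‖ := integral_const_mul _ _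
      _ ≤ C * (‖hmemsub.toLp _‖ * Real.sqrt ((volume (Set.Ioc t t')).toReal)) :=
          mul_le_mul_of_nonneg_left
            (l1_bound _ hmemsub measurableSet_Ioc hsub2) hC
      _ ≤ L * Real.sqrt (t' - t) := by
          have hnorm : ‖hmemsub.toLp _‖ ≤ ‖X‖ + B := by
            rw [show hmemsub.toLp _ = X - (hνseq k).toLp (νseq k) from MemLp.toLp_sub hν (hνseq k)]
            exact le_trans (norm_sub_le _ _) (by gcongr; exact hB k)
          have hvol : (volume (Set.Ioc t t')).toReal = t' - t := by
            rw [Real.volume_Ioc, ENNReal.toReal_ofReal (by linarith)]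
          rw [hvol, hL_def]
          have hsq : (0:ℝ) ≤ Real.sqrt (t' - t) := Real.sqrt_nonneg _
          calc C * (‖hmemsub.toLp _‖ * Real.sqrt (t' - t))
              ≤ C * ((‖X‖ + B) * Real.sqrt (t' - t)) := by
                refine mul_le_mul_of_nonneg_left ?_ hC
                exact mul_le_mul_of_nonneg_right hnorm hsq
            _ = C * (‖X‖ + B) * Real.sqrt (t' - t) := by ring
  -- pointwise convergence of εf
  have hεpt : ∀ t ∈ Set.Icc (0:ℝ) 1, Tendsto (fun k => εf k t) atTop (nhds 0) := by
    intro t ht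
    have hsub1 : Set.Ioc t 1 ⊆ Set.Icc (0:ℝ) 1 := fun r hr => ⟨le_trans ht.1 hr.1.le, hr.2⟩
    have hcoord : ∀ i : Fin n, Tendsto (fun k => εf k t i) atTop (nhds 0) := by
      intro i
      set K : EuclideanSpace ℝ (Fin n) → V := fun y => Krep j C hC hjbd i y with hK_def
      set η : ℝ → V := Set.indicator (Set.Ioc t 1) (fun r => K (f r)) with hη_def
      have hKcont : Continuous K := Krep_continuous j C hC hjbd hjlip i
      have hηmeas : AEStronglyMeasurable η μ01 :=
        ((hKcont.comp_continuousOn hfc).aestronglyMeasurable measurableSet_Icc).indicator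
          measurableSet_Ioc
      have hηmem : MemLp η 2 μ01 := by
        refine MemLp.of_bound hηmeas C (Filter.Eventually.of_forall (fun r => ?_))
        rw [hη_def]
        by_cases hr : r ∈ Set.Ioc t 1
        · rw [Set.indicator_of_mem hr]
          exact Krep_norm_le j C hC hjbd i (f r)
        · rw [Set.indicator_of_notMem hr, norm_zero]
          exact hC
      have hident : ∀ (w : ℝ → V),
          ∫ r in Set.Icc (0:ℝ) 1, ⟪w r, η r⟫ = ∫ r in Set.Ioc t 1, j (w r) (f r) i := by
        intro w
        have h1 : ∀ r, ⟪w r, η r⟫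
            = (Set.Ioc t 1).indicator (fun r => j (w r) (f r) i) r := by
          intro r
          rw [hη_def]
          by_cases hr : r ∈ Set.Ioc t 1
          · rw [Set.indicator_of_mem hr, Set.indicator_of_mem hr, hK_def]
            exact Krep_inner j C hC hjbd i (f r) (w r)
          · rw [Set.indicator_of_notMem hr, Set.indicator_of_notMem hr, inner_zero_right]
        simp_rw [h1]
        rw [setIntegral_indicator measurableSet_Ioc,
          Set.inter_eq_self_of_subset_right
            (fun r (hr : r ∈ Set.Ioc t 1) => hsub1 hr)]
      have hw := hweak η hηmem
      have hrw : (fun k => ∫ r in Set.Icc (0:ℝ) 1, ⟪νseq k r, η r⟫)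
          = fun k => ∫ r in Set.Ioc t 1, j (νseq k r) (f r) i :=
        funext fun k => hident (νseq k)
      rw [hrw, hident ν] at hw
      have hco : ∀ k, εf k t i = (∫ r in Set.Ioc t 1, j (ν r) (f r) i)
          - ∫ r in Set.Ioc t 1, j (νseq k r) (f r) i := by
        intro k
        have hsubint : IntegrableOn (fun r => j (ν r) (f r) - j (νseq k r) (f r))
            (Set.Ioc t 1) volume := (hFint.mono_set hsub1).sub ((hGkint k).mono_set hsub1)
        have h1 : εf k t i
            = ∫ r in Set.Ioc t 1, ((j (ν r) (f r) - j (νseq k r) (f r)) i) := by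
          rw [hεf_def]
          exact ((EuclideanSpace.proj (𝕜 := ℝ) i).integral_comp_comm hsubint).symm
        rw [h1]
        have h2 : ∀ r, ((j (ν r) (f r) - j (νseq k r) (f r)) i)
            = j (ν r) (f r) i - j (νseq k r) (f r) i := fun r => rfl
        simp_rw [h2]
        exact integral_sub
          ((EuclideanSpace.proj (𝕜 := ℝ) i).integrable_comp (hFint.mono_set hsub1))
          ((EuclideanSpace.proj (𝕜 := ℝ) i).integrable_comp ((hGkint k).mono_set hsub1))
      have hfin := (tendsto_const_nhds
        (x := ∫ r in Set.Ioc t 1, j (ν r) (f r) i) (f := atTop)).sub hw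
      rw [sub_self] at hfin
      have : (fun k => εf k t i) = fun k => (∫ r in Set.Ioc t 1, j (ν r) (f r) i)
          - ∫ r in Set.Ioc t 1, j (νseq k r) (f r) i := funext hco
      rw [this]
      exact hfin
    -- reconstruct from coordinates
    have hsum : ∀ k, εf k t
        = ∑ i : Fin n, (εf k t i) • (EuclideanSpace.basisFun (Fin n) ℝ) i := by
      intro k
      have := (EuclideanSpace.basisFun (Fin n) ℝ).sum_repr (εf k t)
      simp only [EuclideanSpace.basisFun_repr] at this
      exact this.symm
    have htot := tendsto_finset_sum (Finset.univ : Finset (Fin n))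
      (fun i _ => (hcoord i).smul_const ((EuclideanSpace.basisFun (Fin n) ℝ) i))
    simp only [zero_smul, Finset.sum_const_zero] at htot
    have : (fun k => εf k t)
        = fun k => ∑ i : Fin n, (εf k t i) • (EuclideanSpace.basisFun (Fin n) ℝ) i :=
      funext hsum
    rw [this]
    exact htot
  -- basic bound on the distance between the flows
  set g : ℕ → ℝ → ℝ := fun k t => ‖φseq k 1 t x - f t‖ with hg_def
  have hgc : ∀ k, ContinuousOn (g k) (Set.Icc 0 1) :=
    fun k => ((hfkc k).sub hfc).norm
  have hg0 : ∀ k, ∀ t ∈ Set.Icc (0:ℝ) 1, 0 ≤ g k t := fun k t _ => norm_nonneg _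
  have hgG : ∀ k, ∀ t ∈ Set.Icc (0:ℝ) 1, g k t ≤ G := by
    intro k t ht
    have h1 : ‖φseq k 1 t x - x‖ ≤ C * ‖(hνseq k).toLp (νseq k)‖ :=
      flow_dist j C hC hjbd hjlip (hνseq k) (hφseqcont k) (hφseq k) x ht
    have h2 : ‖f t - x‖ ≤ C * ‖X‖ :=
      flow_dist j C hC hjbd hjlip hν hφcont hφ x ht
    have h3 : C * ‖(hνseq k).toLp (νseq k)‖ ≤ C * B := mul_le_mul_of_nonneg_left (hB k) hC
    calc g k t = ‖(φseq k 1 t x - x) - (f t - x)‖ := by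
          show ‖φseq k 1 t x - f t‖ = _
          congr 1
          abel
      _ ≤ ‖φseq k 1 t x - x‖ + ‖f t - x‖ := norm_sub_le _ _
      _ ≤ G := by rw [hG_def]; linarith
  -- the master inequality
  have hineq : ∀ k, ∀ t ∈ Set.Icc (0:ℝ) 1,
      g k t ≤ ‖εf k t‖ + ∫ r in Set.Ioc t 1, a k r * g k r := by
    intro k t ht
    have hsub1 : Set.Ioc t 1 ⊆ Set.Icc (0:ℝ) 1 := fun r hr => ⟨le_trans ht.1 hr.1.le, hr.2⟩
    have hD1int : IntegrableOn (fun r => j (ν r) (f r) - j (νseq k r) (f r))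
        (Set.Ioc t 1) volume := (hFint.mono_set hsub1).sub ((hGkint k).mono_set hsub1)
    have hD2int : IntegrableOn (fun r => j (νseq k r) (f r) - j (νseq k r) (φseq k 1 r x))
        (Set.Ioc t 1) volume := ((hGkint k).mono_set hsub1).sub ((hFkint k).mono_set hsub1)
    have hagint : IntegrableOn (fun r => a k r * g k r) (Set.Ioc t 1) volume := by
      refine Integrable.mono' (((ha_int k).integrableOn).const_mul G)
        (((ha_int k).aestronglyMeasurable.restrict).mul
          (((hgc k).mono hsub1).aestronglyMeasurable measurableSet_Ioc)) ?_
      rw [ae_restrict_iff' measurableSet_Ioc]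
      refine Filter.Eventually.of_forall (fun r hr => ?_)
      rw [Real.norm_eq_abs, abs_mul, abs_of_nonneg (ha0 k r),
        abs_of_nonneg (hg0 k r (hsub1 hr))]
      calc a k r * g k r ≤ a k r * G :=
            mul_le_mul_of_nonneg_left (hgG k r (hsub1 hr)) (ha0 k r)
        _ = G * a k r := by ring
    have hd : φseq k 1 t x - f t
        = (∫ r in Set.Ioc t 1, (j (ν r) (f r) - j (νseq k r) (f r)))
            + ∫ r in Set.Ioc t 1, (j (νseq k r) (f r) - j (νseq k r) (φseq k 1 r x)) := by
      have hrx : f t = x - ∫ r in Set.Ioc t 1, j (ν r) (f r) := flow_repr j x hφ ht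
      have hrk : φseq k 1 t x = x - ∫ r in Set.Ioc t 1, j (νseq k r) (φseq k 1 r x) :=
        flow_repr j x (hφseq k) ht
      rw [hrx, hrk, integral_sub (hFint.mono_set hsub1) ((hGkint k).mono_set hsub1),
        integral_sub ((hGkint k).mono_set hsub1) ((hFkint k).mono_set hsub1)]
      abel
    calc g k t = ‖(∫ r in Set.Ioc t 1, (j (ν r) (f r) - j (νseq k r) (f r)))
          + ∫ r in Set.Ioc t 1, (j (νseq k r) (f r) - j (νseq k r) (φseq k 1 r x))‖ := by
          show ‖φseq k 1 t x - f t‖ = _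
          rw [hd]
      _ ≤ ‖εf k t‖
          + ‖∫ r in Set.Ioc t 1, (j (νseq k r) (f r) - j (νseq k r) (φseq k 1 r x))‖ :=
          norm_add_le _ _
      _ ≤ ‖εf k t‖ + ∫ r in Set.Ioc t 1, a k r * g k r := by
          gcongr
          refine le_trans (norm_integral_le_integral_norm _) ?_
          refine setIntegral_mono_on hD2int.norm hagint measurableSet_Ioc ?_
          intro r hr
          have ha_eq : a k r = C * ‖νseq k r‖ := by
            rw [ha_def]
            exact Set.indicator_of_mem (hsub1 hr) _
          rw [ha_eq]
          calc ‖j (νseq k r) (f r) - j (νseq k r) (φseq k 1 r x)‖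
              ≤ C * ‖νseq k r‖ * ‖f r - φseq k 1 r x‖ := hjlip _ _ _
            _ = C * ‖νseq k r‖ * g k r := by rw [norm_sub_rev]
  -- final assembly
  rw [tendsto_iff_norm_sub_tendsto_zero]
  have hshow : (fun k => ‖φseq k 1 0 x - φ 1 0 x‖) = fun k => g k 0 := rfl
  rw [hshow]
  rw [Metric.tendsto_atTop]
  intro ε hε
  have hmtend : Tendsto (fun m : ℕ => G * ((C * B) ^ m / m.factorial)) atTop (nhds 0) := by
    have := (FloorSemiring.tendsto_pow_div_factorial_atTop (K := ℝ) (C * B)).const_mul G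
    simpa using this
  obtain ⟨m, hm⟩ := (hmtend.eventually_lt_const (half_pos hε)).exists
  set expA := Real.exp (C * B) with hexpA_def
  have hexp_pos : 0 < expA := Real.exp_pos _
  set δ := (ε / 2) / expA with hδ_def
  have hδ : 0 < δ := by positivity
  have hunif := unif_small εf L δ hL0 hδ hεpt hεec
  obtain ⟨N, hN⟩ := Filter.eventually_atTop.mp hunif
  refine ⟨N, fun k hk => ?_⟩
  have hineq' : ∀ t ∈ Set.Icc (0:ℝ) 1, g k t ≤ δ + ∫ r in Set.Ioc t 1, a k r * g k r := by
    intro t ht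
    exact le_trans (hineq k t ht) (by gcongr; exact hN k hk t ht)
  have hgr := gronwall (ha_int k) (ha0 k) hδ.le hG0 (hgc k) (hg0 k) (hgG k) hineq' m 0
    (by norm_num)
  have hbound : g k 0 < ε := by
    have hA0 : 0 ≤ Aint (a k) 0 := Aint_nonneg (ha0 k) 0
    have h1 : δ * Real.exp (Aint (a k) 0) ≤ δ * expA := by
      refine mul_le_mul_of_nonneg_left ?_ hδ.le
      rw [hexpA_def]
      exact Real.exp_le_exp.mpr (hAk k)
    have h2 : G * (Aint (a k) 0) ^ m / m.factorial ≤ G * ((C * B) ^ m / m.factorial) := by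
      rw [mul_div_assoc]
      refine mul_le_mul_of_nonneg_left ?_ hG0
      gcongr
      exact hAk k
    have h3 : δ * expA = ε / 2 := by
      rw [hδ_def, div_mul_cancel₀ _ hexp_pos.ne']
    calc g k 0 ≤ δ * Real.exp (Aint (a k) 0) + G * (Aint (a k) 0) ^ m / m.factorial := hgr
      _ ≤ δ * expA + G * ((C * B) ^ m / m.factorial) := add_le_add h1 h2
      _ < ε / 2 + ε / 2 := by rw [h3]; linarith
      _ = ε := by ring
  rw [Real.dist_eq, sub_zero, abs_of_nonneg (hg0 k 0 (by norm_num))]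
  exact hbound

end main

end DTaux

/-- **Convergence of deformed templates (geometric group action).**
`(V, j, C)` is an admissible Hilbert space of vector fields, `Ω ⊆ ℝⁿ` is bounded and
measurable, and `I : ℝⁿ → ℝ` is a bounded continuous template.  For
`ν ∈ L²([0,1]; V)` with two-parameter flow `φ_ν`, the deformed template is
`W(ν)(x) = I (φ_ν 1 0 x)` (geometric group action).  If `ν_k ⇀ ν` weakly in
`L²([0,1]; V)`, then `∫_Ω |W(ν_k)(x) − W(ν)(x)|² dx → 0`. -/
theorem deformed_templates_L2_convergence_of_weak_convergence
    (n : ℕ)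
    (V : Type) [NormedAddCommGroup V] [InnerProductSpace ℝ V] [CompleteSpace V]
    [TopologicalSpace.SeparableSpace V]
    (j : V →ₗ[ℝ] (EuclideanSpace ℝ (Fin n) → EuclideanSpace ℝ (Fin n)))
    (C : ℝ) (hC : 0 ≤ C)
    (hjbd : ∀ (v : V) (x : EuclideanSpace ℝ (Fin n)), ‖j v x‖ ≤ C * ‖v‖)
    (hjlip : ∀ (v : V) (x y : EuclideanSpace ℝ (Fin n)),
      ‖j v x - j v y‖ ≤ C * ‖v‖ * ‖x - y‖)
    (Ω : Set (EuclideanSpace ℝ (Fin n)))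
    (hΩbdd : Bornology.IsBounded Ω) (hΩmeas : MeasurableSet Ω)
    (I : EuclideanSpace ℝ (Fin n) → ℝ) (hIcont : Continuous I)
    (M : ℝ) (hIbdd : ∀ x, |I x| ≤ M)
    (ν : ℝ → V) (νseq : ℕ → ℝ → V)
    (hν : MemLp ν 2 (volume.restrict (Icc (0:ℝ) 1)))
    (hνseq : ∀ k, MemLp (νseq k) 2 (volume.restrict (Icc (0:ℝ) 1)))
    (hweak : ∀ η : ℝ → V, MemLp η 2 (volume.restrict (Icc (0:ℝ) 1)) →
      Tendsto (fun k => ∫ t in Icc (0:ℝ) 1, ⟪νseq k t, η t⟫) atTop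
        (nhds (∫ t in Icc (0:ℝ) 1, ⟪ν t, η t⟫)))
    (φ : ℝ → ℝ → EuclideanSpace ℝ (Fin n) → EuclideanSpace ℝ (Fin n))
    (φseq : ℕ → ℝ → ℝ → EuclideanSpace ℝ (Fin n) → EuclideanSpace ℝ (Fin n))
    (hφcont : ∀ s ∈ Icc (0:ℝ) 1, ∀ x, ContinuousOn (fun t => φ s t x) (Icc (0:ℝ) 1))
    (hφ : ∀ s ∈ Icc (0:ℝ) 1, ∀ x, ∀ t ∈ Icc (0:ℝ) 1,
      φ s t x = x + ∫ r in s..t, j (ν r) (φ s r x))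
    (hφseqcont : ∀ k, ∀ s ∈ Icc (0:ℝ) 1, ∀ x,
      ContinuousOn (fun t => φseq k s t x) (Icc (0:ℝ) 1))
    (hφseq : ∀ k, ∀ s ∈ Icc (0:ℝ) 1, ∀ x, ∀ t ∈ Icc (0:ℝ) 1,
      φseq k s t x = x + ∫ r in s..t, j (νseq k r) (φseq k s r x)) :
    Tendsto (fun k => ∫ x in Ω, |I (φseq k 1 0 x) - I (φ 1 0 x)| ^ 2) atTop (nhds 0) := by
  have hM0 : 0 ≤ M := le_trans (abs_nonneg _) (hIbdd 0)
  have hpoint : ∀ x, Tendsto (fun k => φseq k 1 0 x) atTop (nhds (φ 1 0 x)) :=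
    fun x => DTaux.flows_converge j C hC hjbd hjlip ν νseq hν hνseq hweak φ φseq
      hφcont hφ hφseqcont hφseq x
  have hcont : Continuous (fun x => φ 1 0 x) :=
    DTaux.flow_cont j C hC hjbd hjlip hν hφcont hφ
  have hcontk : ∀ k, Continuous (fun x => φseq k 1 0 x) :=
    fun k => DTaux.flow_cont j C hC hjbd hjlip (hνseq k) (hφseqcont k) (hφseq k)
  haveI : IsFiniteMeasure (volume.restrict Ω) :=
    ⟨by rw [Measure.restrict_apply_univ]; exact hΩbdd.measure_lt_top⟩
  have hsub_bd : ∀ (y z : EuclideanSpace ℝ (Fin n)), |I y - I z| ≤ 2 * M := by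
    intro y z
    rw [sub_eq_add_neg]
    refine le_trans (abs_add_le _ _) ?_
    rw [abs_neg]
    linarith [hIbdd y, hIbdd z]
  have h := tendsto_integral_of_dominated_convergence (μ := volume.restrict Ω)
    (F := fun k x => |I (φseq k 1 0 x) - I (φ 1 0 x)| ^ 2) (f := fun _ => (0:ℝ))
    (fun _ => (2*M)^2)
    (fun k => (((hIcont.comp (hcontk k)).sub (hIcont.comp hcont)).abs.pow 2).aestronglyMeasurable)
    (integrable_const _)
    (fun k => Filter.Eventually.of_forall (fun x => by
      rw [Real.norm_eq_abs, abs_of_nonneg (by positivity : (0:ℝ) ≤ |I (φseq k 1 0 x) - I (φ 1 0 x)| ^ 2)]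
      exact pow_le_pow_left₀ (abs_nonneg _) (hsub_bd _ _) 2))
    (Filter.Eventually.of_forall (fun x => by
      have hc : Continuous (fun y => |I y - I (φ 1 0 x)| ^ 2) :=
        ((hIcont.sub continuous_const).abs.pow 2)
      have := (hc.tendsto (φ 1 0 x)).comp (hpoint x)
      simpa [Function.comp_def] using this))
  simpa using h
end

section
/- Let Ω ⊂ ℝⁿ be a bounded measurable set and I : ℝⁿ → ℝ a bounded continuous function. Let ψ, ψ_k : Ω → ℝⁿ (k ∈ ℕ) be continuously differentiable maps such that: (i) ψ_k → ψ uniformly on Ω; (ii) the Jacobian determinants det Dψ_k converge uniformly on Ω to det Dψ; and (iii) there is a constant M with |det Dψ_k(x)| ≤ M for all k and x ∈ Ω. Then the mass-preserving deformed templates converge in L²(Ω, ℝ): ∫_Ω | |det Dψ_k(x)| I(ψ_k(x)) − |det Dψ(x)| I(ψ(x)) |² dx → 0 as k → ∞. -/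
open MeasureTheory Set Filter

/-- **Convergence of mass-preserving deformed templates.**
Let `Ω ⊆ ℝⁿ` be bounded and measurable and `I : ℝⁿ → ℝ` bounded continuous.  Let
`ψ, ψ_k : ℝⁿ → ℝⁿ` be `C¹` maps such that (i) `ψ_k → ψ` uniformly on `Ω`, (ii) the
Jacobian determinants `det Dψ_k → det Dψ` uniformly on `Ω`, and (iii) `|det Dψ_k| ≤ M`
on `Ω` for all `k`.  Then the mass-preserving deformed templates converge in `L²(Ω)`:
`∫_Ω | |det Dψ_k| I∘ψ_k − |det Dψ| I∘ψ |² → 0`. -/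
theorem massPreserving_deformed_templates_L2_convergence
    (n : ℕ) (Ω : Set (EuclideanSpace ℝ (Fin n)))
    (hΩbdd : Bornology.IsBounded Ω) (hΩmeas : MeasurableSet Ω)
    (I : EuclideanSpace ℝ (Fin n) → ℝ) (hIcont : Continuous I)
    (MI : ℝ) (hIbdd : ∀ x, |I x| ≤ MI)
    (ψ : EuclideanSpace ℝ (Fin n) → EuclideanSpace ℝ (Fin n))
    (ψseq : ℕ → EuclideanSpace ℝ (Fin n) → EuclideanSpace ℝ (Fin n))
    (hψ : ContDiff ℝ 1 ψ) (hψseq : ∀ k, ContDiff ℝ 1 (ψseq k))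
    (hunif : TendstoUniformlyOn (fun k x => ψseq k x) ψ atTop Ω)
    (hdetunif : TendstoUniformlyOn (fun k x => (fderiv ℝ (ψseq k) x).det)
      (fun x => (fderiv ℝ ψ x).det) atTop Ω)
    (M : ℝ) (hdetbdd : ∀ k, ∀ x ∈ Ω, |(fderiv ℝ (ψseq k) x).det| ≤ M) :
    Tendsto (fun k => ∫ x in Ω,
        |((|(fderiv ℝ (ψseq k) x).det| * I (ψseq k x))
          - (|(fderiv ℝ ψ x).det| * I (ψ x)))| ^ 2)
      atTop (nhds 0) := by
  have hμ : volume Ω < ⊤ := hΩbdd.measure_lt_top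
  -- pointwise convergence on Ω
  have hpt : ∀ x ∈ Ω, Tendsto (fun k =>
      |((|(fderiv ℝ (ψseq k) x).det| * I (ψseq k x))
        - (|(fderiv ℝ ψ x).det| * I (ψ x)))| ^ 2) atTop (nhds 0) := by
    intro x hx
    have h1 : Tendsto (fun k => ψseq k x) atTop (nhds (ψ x)) := hunif.tendsto_at hx
    have h2 : Tendsto (fun k => (fderiv ℝ (ψseq k) x).det) atTop
        (nhds ((fderiv ℝ ψ x).det)) := hdetunif.tendsto_at hx
    have h3 : Tendsto (fun k => |(fderiv ℝ (ψseq k) x).det| * I (ψseq k x)) atTop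
        (nhds (|(fderiv ℝ ψ x).det| * I (ψ x))) :=
      (h2.abs).mul ((hIcont.tendsto _).comp h1)
    have h4 := ((h3.sub (tendsto_const_nhds (x := |(fderiv ℝ ψ x).det| * I (ψ x)))).abs).pow 2
    simpa using h4
  have hdetlim : ∀ x ∈ Ω, |(fderiv ℝ ψ x).det| ≤ M := by
    intro x hx
    have h2 : Tendsto (fun k => |(fderiv ℝ (ψseq k) x).det|) atTop
        (nhds (|(fderiv ℝ ψ x).det|)) := (hdetunif.tendsto_at hx).abs
    exact le_of_tendsto h2 (Eventually.of_forall fun k => hdetbdd k x hx)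
  have hMI : 0 ≤ MI := le_trans (abs_nonneg _) (hIbdd 0)
  -- measurability of each term
  have hmeas : ∀ k, AEStronglyMeasurable (fun x =>
      |((|(fderiv ℝ (ψseq k) x).det| * I (ψseq k x))
        - (|(fderiv ℝ ψ x).det| * I (ψ x)))| ^ 2) (volume.restrict Ω) := by
    intro k
    have c1 : Continuous fun x => (fderiv ℝ (ψseq k) x).det :=
      ContinuousLinearMap.continuous_det.comp ((hψseq k).continuous_fderiv one_ne_zero)
    have c2 : Continuous fun x => (fderiv ℝ ψ x).det :=
      ContinuousLinearMap.continuous_det.comp (hψ.continuous_fderiv one_ne_zero)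
    exact (((((c1.abs.mul (hIcont.comp ((hψseq k).continuous))).sub
      (c2.abs.mul (hIcont.comp hψ.continuous))).abs).pow 2)).aestronglyMeasurable
  have hbound : ∀ k, ∀ᵐ x ∂(volume.restrict Ω),
      ‖|((|(fderiv ℝ (ψseq k) x).det| * I (ψseq k x))
        - (|(fderiv ℝ ψ x).det| * I (ψ x)))| ^ 2‖ ≤ (2 * M * MI) ^ 2 := by
    intro k
    filter_upwards [ae_restrict_mem hΩmeas] with x hx
    have hM0 : 0 ≤ M := le_trans (abs_nonneg _) (hdetbdd k x hx)
    have h1 : |(|(fderiv ℝ (ψseq k) x).det| * I (ψseq k x))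
        - (|(fderiv ℝ ψ x).det| * I (ψ x))| ≤ 2 * M * MI := by
      have ha : |(|(fderiv ℝ (ψseq k) x).det| * I (ψseq k x))| ≤ M * MI := by
        rw [abs_mul, abs_abs]
        exact mul_le_mul (hdetbdd k x hx) (hIbdd _) (abs_nonneg _) hM0
      have hb : |(|(fderiv ℝ ψ x).det| * I (ψ x))| ≤ M * MI := by
        rw [abs_mul, abs_abs]
        exact mul_le_mul (hdetlim x hx) (hIbdd _) (abs_nonneg _) hM0
      calc |(|(fderiv ℝ (ψseq k) x).det| * I (ψseq k x))
          - (|(fderiv ℝ ψ x).det| * I (ψ x))|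
          ≤ |(|(fderiv ℝ (ψseq k) x).det| * I (ψseq k x))|
            + |(|(fderiv ℝ ψ x).det| * I (ψ x))| := abs_sub _ _
        _ ≤ M * MI + M * MI := add_le_add ha hb
        _ = 2 * M * MI := by ring
    rw [Real.norm_eq_abs, abs_pow, abs_abs]
    exact pow_le_pow_left₀ (abs_nonneg _) h1 2
  have hint : Integrable (fun _ : EuclideanSpace ℝ (Fin n) => (2 * M * MI) ^ 2)
      (volume.restrict Ω) := by
    rw [integrable_const_iff]
    right
    exact ⟨by simpa [Measure.restrict_apply_univ] using hμ⟩
  have := tendsto_integral_of_dominated_convergence (μ := volume.restrict Ω)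
    (F := fun k x => |((|(fderiv ℝ (ψseq k) x).det| * I (ψseq k x))
        - (|(fderiv ℝ ψ x).det| * I (ψ x)))| ^ 2)
    (f := fun _ => (0 : ℝ)) (fun _ => (2 * M * MI) ^ 2) hmeas hint hbound
    (by filter_upwards [ae_restrict_mem hΩmeas] with x hx using hpt x hx)
  simpa using this
end

section
/- Let H be a separable real Hilbert space, X a real normed space, W : H → X weak-to-norm sequentially continuous, F : X → ℝ lower semicontinuous and bounded below, and γ > 0. Then the functional E : H → ℝ defined by E(ν) = γ‖ν‖_H² + F(W(ν)) attains its infimum, i.e. there exists ν* ∈ H with E(ν*) ≤ E(ν) for all ν ∈ H. -/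
open Filter
open scoped RealInnerProductSpace

/-- Bounded sequences in a separable real Hilbert space have weakly convergent
subsequences. -/
lemma weak_seq_compact
    (H : Type) [NormedAddCommGroup H] [InnerProductSpace ℝ H] [CompleteSpace H]
    [TopologicalSpace.SeparableSpace H]
    (u : ℕ → H) (M : ℝ) (hM1 : 1 ≤ M) (hM : ∀ k, ‖u k‖ ≤ M) :
    ∃ ν : H, ∃ φ : ℕ → ℕ, StrictMono φ ∧
      ∀ η : H, Tendsto (fun k => ⟪u (φ k), η⟫) atTop (nhds ⟪ν, η⟫) := by
  have hM0 : (0:ℝ) < M := lt_of_lt_of_le one_pos hM1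
  haveI : Nonempty H := ⟨0⟩
  set e : ℕ → H := TopologicalSpace.denseSeq H with he
  have hdense : DenseRange e := TopologicalSpace.denseRange_denseSeq H
  -- the sequence of inner products with the dense family lies in a compact product set
  set S : Set (ℕ → ℝ) := Set.univ.pi (fun n => Set.Icc (-(M * ‖e n‖)) (M * ‖e n‖)) with hS
  have hScomp : IsCompact S := isCompact_univ_pi (fun n => isCompact_Icc)
  have hmem : ∀ k, (fun n => ⟪u k, e n⟫) ∈ S := by
    intro k
    intro n _
    have h := abs_real_inner_le_norm (u k) (e n)
    have h2 : |⟪u k, e n⟫| ≤ M * ‖e n‖ :=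
      h.trans (by
        have := hM k
        nlinarith [norm_nonneg (e n)])
    exact abs_le.mp h2
  obtain ⟨L, -, φ, hφ, hLtend⟩ := hScomp.tendsto_subseq hmem
  rw [tendsto_pi_nhds] at hLtend
  -- Cauchy in every direction
  have hcauchy : ∀ η : H, CauchySeq (fun k => ⟪u (φ k), η⟫) := by
    intro η
    rw [Metric.cauchySeq_iff]
    intro ε hε
    obtain ⟨n0, hn0⟩ := Metric.denseRange_iff.mp hdense η (ε / (4 * M))
      (by positivity)
    have hc : CauchySeq (fun k => ⟪u (φ k), e n0⟫) := (hLtend n0).cauchySeq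
    rw [Metric.cauchySeq_iff] at hc
    obtain ⟨N, hN⟩ := hc (ε / 2) (by positivity)
    refine ⟨N, fun p hp q hq => ?_⟩
    have h1 := hN p hp q hq
    have key : ∀ r, |⟪u (φ r), η⟫ - ⟪u (φ r), e n0⟫| ≤ M * (ε / (4 * M)) := by
      intro r
      have : ⟪u (φ r), η⟫ - ⟪u (φ r), e n0⟫ = ⟪u (φ r), η - e n0⟫ := by
        rw [inner_sub_right]
      rw [this]
      have h3 := abs_real_inner_le_norm (u (φ r)) (η - e n0)
      have h4 : ‖η - e n0‖ ≤ ε / (4 * M) := by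
        rw [← dist_eq_norm]
        exact le_of_lt hn0
      nlinarith [hM (φ r), norm_nonneg (η - e n0), abs_nonneg (⟪u (φ r), η - e n0⟫)]
    have hMε : M * (ε / (4 * M)) = ε / 4 := by field_simp
    rw [Real.dist_eq] at h1 ⊢
    have kp := key p
    have kq := key q
    rw [hMε] at kp kq
    calc |⟪u (φ p), η⟫ - ⟪u (φ q), η⟫|
        ≤ |⟪u (φ p), η⟫ - ⟪u (φ p), e n0⟫| + |⟪u (φ p), e n0⟫ - ⟪u (φ q), e n0⟫|
          + |⟪u (φ q), e n0⟫ - ⟪u (φ q), η⟫| := by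
            have := abs_sub_le (⟪u (φ p), η⟫) (⟪u (φ p), e n0⟫) (⟪u (φ q), η⟫)
            have := abs_sub_le (⟪u (φ p), e n0⟫) (⟪u (φ q), e n0⟫) (⟪u (φ q), η⟫)
            linarith [abs_sub_le (⟪u (φ p), η⟫) (⟪u (φ p), e n0⟫) (⟪u (φ q), η⟫),
              abs_sub_le (⟪u (φ p), e n0⟫) (⟪u (φ q), e n0⟫) (⟪u (φ q), η⟫)]
      _ < ε := by
            rw [abs_sub_comm (⟪u (φ q), e n0⟫)] at *
            linarith
  have hconv : ∀ η : H, ∃ l : ℝ, Tendsto (fun k => ⟪u (φ k), η⟫) atTop (nhds l) :=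
    fun η => cauchySeq_tendsto_of_complete (hcauchy η)
  choose g hg using hconv
  -- g is a bounded linear functional
  have hgadd : ∀ η η' : H, g (η + η') = g η + g η' := by
    intro η η'
    refine tendsto_nhds_unique ?_ ((hg η).add (hg η'))
    have : (fun k => ⟪u (φ k), η + η'⟫) = fun k => ⟪u (φ k), η⟫ + ⟪u (φ k), η'⟫ := by
      funext k; rw [inner_add_right]
    rw [← this]
    exact hg (η + η')
  have hgsmul : ∀ (c : ℝ) (η : H), g (c • η) = c * g η := by
    intro c η
    refine tendsto_nhds_unique ?_ ((hg η).const_mul c)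
    have : (fun k => ⟪u (φ k), c • η⟫) = fun k => c * ⟪u (φ k), η⟫ := by
      funext k; rw [real_inner_smul_right]
    rw [← this]
    exact hg (c • η)
  have hgbdd : ∀ η : H, |g η| ≤ M * ‖η‖ := by
    intro η
    have : Tendsto (fun k => |⟪u (φ k), η⟫|) atTop (nhds |g η|) := (hg η).abs
    refine le_of_tendsto this (Eventually.of_forall fun k => ?_)
    exact (abs_real_inner_le_norm _ _).trans
      (mul_le_mul_of_nonneg_right (hM (φ k)) (norm_nonneg _))
  let gl : H →ₗ[ℝ] ℝ :=
    { toFun := g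
      map_add' := hgadd
      map_smul' := hgsmul }
  let gL : H →L[ℝ] ℝ := LinearMap.mkContinuous gl M
    (fun η => by
      have : ‖gl η‖ = |g η| := rfl
      rw [this]; exact hgbdd η)
  refine ⟨(InnerProductSpace.toDual ℝ H).symm gL, φ, hφ, fun η => ?_⟩
  have : ⟪(InnerProductSpace.toDual ℝ H).symm gL, η⟫ = gL η :=
    InnerProductSpace.toDual_symm_apply
  rw [this]
  exact hg η

/-- **Existence of minimizers for indirect registration.**
Let `H` be a separable real Hilbert space, `X` a real normed space, `W : H → X`
weak-to-norm sequentially continuous, `F : X → ℝ` lower semicontinuous and bounded below,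
and `γ > 0`.  Then `E(ν) = γ‖ν‖² + F(W ν)` attains its infimum on `H`. -/
theorem indirect_registration_existence
    (H : Type) [NormedAddCommGroup H] [InnerProductSpace ℝ H] [CompleteSpace H]
    [TopologicalSpace.SeparableSpace H]
    (X : Type) [NormedAddCommGroup X] [NormedSpace ℝ X]
    (W : H → X)
    (hW : ∀ (ν : H) (νseq : ℕ → H),
      (∀ η : H, Tendsto (fun k => ⟪νseq k, η⟫) atTop (nhds ⟪ν, η⟫)) →
      Tendsto (fun k => ‖W (νseq k) - W ν‖) atTop (nhds 0))
    (F : X → ℝ) (hF : LowerSemicontinuous F) (hFbdd : BddBelow (Set.range F))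
    (γ : ℝ) (hγ : 0 < γ) :
    ∃ νstar : H, ∀ ν : H,
      γ * ‖νstar‖ ^ 2 + F (W νstar) ≤ γ * ‖ν‖ ^ 2 + F (W ν) := by
  obtain ⟨B, hB⟩ := hFbdd
  have hFB : ∀ x, B ≤ F x := fun x => hB ⟨x, rfl⟩
  set E : H → ℝ := fun ν => γ * ‖ν‖ ^ 2 + F (W ν) with hE
  haveI : Nonempty H := ⟨0⟩
  have hEbdd : BddBelow (Set.range E) := by
    refine ⟨B, ?_⟩
    rintro _ ⟨ν, rfl⟩
    have := hFB (W ν)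
    have := sq_nonneg ‖ν‖
    simp only [hE]
    nlinarith
  set m : ℝ := ⨅ ν, E ν with hm
  have hmle : ∀ ν, m ≤ E ν := fun ν => ciInf_le hEbdd ν
  have hseq : ∀ k : ℕ, ∃ ν, E ν < m + 1 / (k + 1) := by
    intro k
    apply exists_lt_of_ciInf_lt
    have : (0:ℝ) < 1 / (k + 1) := by positivity
    linarith
  choose u hu using hseq
  -- the minimizing sequence is bounded
  have hub : ∀ k, ‖u k‖ ^ 2 ≤ (m + 1 - B) / γ := by
    intro k
    have h1 := hu k
    have h2 : (1:ℝ) / (k + 1) ≤ 1 := by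
      rw [div_le_one (by positivity)]
      have : (0:ℝ) ≤ (k:ℝ) := Nat.cast_nonneg k
      linarith
    have h3 := hFB (W (u k))
    rw [hE] at h1
    rw [le_div_iff₀ hγ]
    simp only at h1
    nlinarith
  set M : ℝ := max 1 (Real.sqrt ((m + 1 - B) / γ)) with hMdef
  have hM : ∀ k, ‖u k‖ ≤ M := by
    intro k
    refine le_trans ?_ (le_max_right _ _)
    have h0 : (0:ℝ) ≤ (m + 1 - B) / γ := le_trans (sq_nonneg ‖u k‖) (hub k)
    rw [show ‖u k‖ = Real.sqrt (‖u k‖ ^ 2) by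
      rw [Real.sqrt_sq (norm_nonneg _)]]
    exact Real.sqrt_le_sqrt (hub k)
  obtain ⟨νstar, φ, hφ, hweak⟩ :=
    weak_seq_compact H u M (le_max_left _ _) hM
  have hWt : Tendsto (fun k => W (u (φ k))) atTop (nhds (W νstar)) :=
    tendsto_iff_norm_sub_tendsto_zero.mpr (hW νstar (fun k => u (φ k)) hweak)
  refine ⟨νstar, fun ν => ?_⟩
  have key : E νstar ≤ m := by
    refine le_of_forall_pos_le_add (fun ε hε => ?_)
    have hFev : ∀ᶠ k in atTop, F (W νstar) - ε / 4 < F (W (u (φ k))) :=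
      hWt.eventually ((hF (W νstar)) (F (W νstar) - ε / 4) (by linarith))
    set ε₁ : ℝ := ε / (8 * γ) with hε₁
    have hε₁pos : 0 < ε₁ := by positivity
    have hnt : Tendsto (fun k => ⟪u (φ k), νstar⟫) atTop (nhds ⟪νstar, νstar⟫) :=
      hweak νstar
    have hlt : ‖νstar‖ ^ 2 - ε₁ < ⟪νstar, νstar⟫ := by
      rw [real_inner_self_eq_norm_sq]; linarith
    have hnev : ∀ᶠ k in atTop, ‖νstar‖ ^ 2 - ε₁ < ⟪u (φ k), νstar⟫ :=
      hnt.eventually (eventually_gt_nhds hlt)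
    have hnev2 : ∀ᶠ k in atTop, ‖νstar‖ ^ 2 < ‖u (φ k)‖ ^ 2 + 2 * ε₁ := by
      filter_upwards [hnev] with k hk
      have h1 : ⟪u (φ k), νstar⟫ ≤ ‖u (φ k)‖ * ‖νstar‖ :=
        real_inner_le_norm _ _
      nlinarith [sq_nonneg (‖u (φ k)‖ - ‖νstar‖)]
    have hφt : Tendsto φ atTop atTop := hφ.tendsto_atTop
    have hone : Tendsto (fun k => 1 / ((φ k : ℝ) + 1)) atTop (nhds 0) :=
      tendsto_one_div_add_atTop_nhds_zero_nat.comp hφt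
    have hsmall : ∀ᶠ k in atTop, 1 / ((φ k : ℝ) + 1) < ε / 4 :=
      hone.eventually (eventually_lt_nhds (by linarith))
    obtain ⟨k, hk1, hk2, hk3⟩ := (hFev.and (hnev2.and hsmall)).exists
    have hEk := hu (φ k)
    rw [hE] at hEk ⊢
    simp only at hEk ⊢
    have h2γ : 2 * γ * ε₁ = ε / 4 := by rw [hε₁]; field_simp; ring
    nlinarith
  calc E νstar ≤ m := key
    _ ≤ E ν := hmle ν
end

section
/- Let H be a separable real Hilbert space, X a real normed space, Y a metric space, W : H → X weak-to-norm sequentially continuous, and G : X × Y → [0,∞) jointly continuous. Fix γ > 0 and g ∈ Y, and for each data element h ∈ Y define E_h : H → ℝ by E_h(ν) = γ‖ν‖_H² + G(W(ν), h). Let g_k → g in Y and suppose for each k that ν_k ∈ H is a minimizer of E_{g_k}. Then there exist a subsequence (ν_{k_j}) and ν̂ ∈ H such that ν_{k_j} ⇀ ν̂ weakly in H and ν̂ is a minimizer of E_g. (Stability of the indirect registration scheme.) -/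
open Filter
open scoped RealInnerProductSpace

set_option maxHeartbeats 1000000 in
/-- **Stability of the indirect registration scheme.**
`H` is a separable real Hilbert space, `X` a real normed space, `Y` a metric space,
`W : H → X` weak-to-norm sequentially continuous, `G : X × Y → [0,∞)` jointly continuous.
Fix `γ > 0`, `g ∈ Y` and set `E_h(ν) = γ‖ν‖² + G(W ν, h)`.  If `g_k → g` and each `ν_k`
minimizes `E_{g_k}`, then some subsequence of `(ν_k)` converges weakly to a minimizer of
`E_g`. -/
theorem indirect_registration_stability
    (H : Type) [NormedAddCommGroup H] [InnerProductSpace ℝ H] [CompleteSpace H]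
    [TopologicalSpace.SeparableSpace H]
    (X : Type) [NormedAddCommGroup X] [NormedSpace ℝ X]
    (Y : Type) [MetricSpace Y]
    (W : H → X)
    (hW : ∀ (ν : H) (νseq : ℕ → H),
      (∀ η : H, Tendsto (fun k => ⟪νseq k, η⟫) atTop (nhds ⟪ν, η⟫)) →
      Tendsto (fun k => ‖W (νseq k) - W ν‖) atTop (nhds 0))
    (G : X × Y → ℝ) (hGcont : Continuous G) (hGnonneg : ∀ p, 0 ≤ G p)
    (γ : ℝ) (hγ : 0 < γ) (g : Y)
    (gseq : ℕ → Y) (hgconv : Tendsto gseq atTop (nhds g))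
    (νseq : ℕ → H)
    (hmin : ∀ k, ∀ ν : H,
      γ * ‖νseq k‖ ^ 2 + G (W (νseq k), gseq k) ≤ γ * ‖ν‖ ^ 2 + G (W ν, gseq k)) :
    ∃ (sub : ℕ → ℕ), StrictMono sub ∧ ∃ νhat : H,
      (∀ η : H, Tendsto (fun j => ⟪νseq (sub j), η⟫) atTop (nhds ⟪νhat, η⟫)) ∧
      (∀ ν : H, γ * ‖νhat‖ ^ 2 + G (W νhat, g) ≤ γ * ‖ν‖ ^ 2 + G (W ν, g)) := by
  have : Nonempty H := ⟨0⟩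
  set e : ℕ → H := TopologicalSpace.denseSeq H with he
  have hdense : DenseRange e := TopologicalSpace.denseRange_denseSeq H
  -- Step 1: uniform bound on the minimizers
  obtain ⟨M, hM⟩ : ∃ M : ℝ, ∀ k, G (W 0, gseq k) ≤ M := by
    have h0 : Tendsto (fun k => G (W 0, gseq k)) atTop (nhds (G (W 0, g))) :=
      (hGcont.tendsto _).comp (tendsto_const_nhds.prodMk_nhds hgconv)
    obtain ⟨M, hM⟩ := h0.bddAbove_range
    exact ⟨M, fun k => hM (Set.mem_range_self k)⟩
  have hMnn : 0 ≤ M := le_trans (hGnonneg _) (hM 0)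
  set R : ℝ := Real.sqrt (M / γ) with hRdef
  have hRnn : 0 ≤ R := Real.sqrt_nonneg _
  have hR : ∀ k, ‖νseq k‖ ≤ R := by
    intro k
    have h1 : γ * ‖νseq k‖ ^ 2 ≤ M := by
      have := hmin k 0
      simp only [norm_zero] at this
      nlinarith [hGnonneg (W (νseq k), gseq k), hGnonneg (W 0, gseq k), hM k]
    have h2 : ‖νseq k‖ ^ 2 ≤ M / γ := by
      rw [le_div_iff₀ hγ]; linarith [h1]
    calc ‖νseq k‖ = Real.sqrt (‖νseq k‖ ^ 2) := by
            rw [Real.sqrt_sq (norm_nonneg _)]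
      _ ≤ R := Real.sqrt_le_sqrt h2
  -- Step 2: extract a subsequence along which norms and inner products with the
  -- dense sequence all converge
  set S : Set (ℝ × (ℕ → ℝ)) :=
    (Set.Icc (0 : ℝ) R) ×ˢ (Set.univ.pi fun n => Set.Icc (-(R * ‖e n‖)) (R * ‖e n‖)) with hSdef
  have hcomp : IsCompact S :=
    isCompact_Icc.prod (isCompact_univ_pi fun n => isCompact_Icc)
  set T : ℕ → ℝ × (ℕ → ℝ) := fun k => (‖νseq k‖, fun n => ⟪νseq k, e n⟫) with hTdef
  have hTmem : ∀ k, T k ∈ S := by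
    intro k
    constructor
    · exact ⟨norm_nonneg _, hR k⟩
    · intro n _
      have h1 : |⟪νseq k, e n⟫| ≤ ‖νseq k‖ * ‖e n‖ := abs_real_inner_le_norm _ _
      have h2 : ‖νseq k‖ * ‖e n‖ ≤ R * ‖e n‖ :=
        mul_le_mul_of_nonneg_right (hR k) (norm_nonneg _)
      constructor
      · linarith [neg_abs_le (⟪νseq k, e n⟫ : ℝ)]
      · linarith [le_abs_self (⟪νseq k, e n⟫ : ℝ)]
  obtain ⟨p, hp, φ, hφ, hconv⟩ := hcomp.tendsto_subseq hTmem
  have hnorm : Tendsto (fun j => ‖νseq (φ j)‖) atTop (nhds p.1) :=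
    (continuous_fst.tendsto p).comp hconv
  have hinner_e : ∀ n, Tendsto (fun j => ⟪νseq (φ j), e n⟫) atTop (nhds (p.2 n)) := by
    intro n
    have h2 : Tendsto (fun j => (T (φ j)).2) atTop (nhds p.2) :=
      (continuous_snd.tendsto p).comp hconv
    exact tendsto_pi_nhds.mp h2 n
  -- Step 3: for every η the sequence of inner products is Cauchy, hence converges
  have hCauchy : ∀ η : H, CauchySeq (fun j => ⟪νseq (φ j), η⟫) := by
    intro η
    rw [Metric.cauchySeq_iff]
    intro ε hε
    obtain ⟨n, hn⟩ := hdense.exists_dist_lt η (show (0:ℝ) < ε / (4 * (R + 1)) by positivity)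
    rw [dist_eq_norm] at hn
    have hc : CauchySeq (fun j => ⟪νseq (φ j), e n⟫) := (hinner_e n).cauchySeq
    obtain ⟨N, hN⟩ := Metric.cauchySeq_iff.mp hc (ε / 2) (by positivity)
    refine ⟨N, fun m hm l hl => ?_⟩
    have key : ∀ j : ℕ, |⟪νseq (φ j), η⟫ - ⟪νseq (φ j), e n⟫| ≤ ε / 4 := by
      intro j
      have h1 : ⟪νseq (φ j), η⟫ - ⟪νseq (φ j), e n⟫ = ⟪νseq (φ j), η - e n⟫ := by
        rw [inner_sub_right]
      rw [h1]
      calc |⟪νseq (φ j), η - e n⟫| ≤ ‖νseq (φ j)‖ * ‖η - e n‖ := abs_real_inner_le_norm _ _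
        _ ≤ R * (ε / (4 * (R + 1))) := by
            apply mul_le_mul (hR _) (le_of_lt hn) (norm_nonneg _) hRnn
        _ ≤ ε / 4 := by
            have hd : (ε / (4 * (R + 1))) * (4 * (R + 1)) = ε :=
              div_mul_cancel₀ ε (by positivity)
            nlinarith [mul_nonneg hRnn (le_of_lt (show (0:ℝ) < ε / (4 * (R + 1)) by positivity))]
    have hdist : dist ⟪νseq (φ m), e n⟫ ⟪νseq (φ l), e n⟫ < ε / 2 := hN m hm l hl
    rw [Real.dist_eq] at hdist ⊢
    calc |⟪νseq (φ m), η⟫ - ⟪νseq (φ l), η⟫|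
        ≤ |⟪νseq (φ m), η⟫ - ⟪νseq (φ m), e n⟫| + |⟪νseq (φ m), e n⟫ - ⟪νseq (φ l), e n⟫|
          + |⟪νseq (φ l), e n⟫ - ⟪νseq (φ l), η⟫| := by
          have := abs_sub_le (⟪νseq (φ m), η⟫ : ℝ) ⟪νseq (φ m), e n⟫ ⟪νseq (φ l), η⟫
          have := abs_sub_le (⟪νseq (φ m), e n⟫ : ℝ) ⟪νseq (φ l), e n⟫ ⟪νseq (φ l), η⟫
          linarith
      _ < ε := by
          have k1 := key m
          have k2 := key l
          rw [abs_sub_comm] at k2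
          linarith
  have hlim : ∀ η : H, ∃ l : ℝ, Tendsto (fun j => ⟪νseq (φ j), η⟫) atTop (nhds l) :=
    fun η => cauchySeq_tendsto_of_complete (hCauchy η)
  choose L hL using hlim
  -- Step 4: the limit functional is bounded linear; Riesz representation
  have hLadd : ∀ η η' : H, L (η + η') = L η + L η' := by
    intro η η'
    refine tendsto_nhds_unique ?_ ((hL η).add (hL η'))
    have : (fun j => ⟪νseq (φ j), η⟫ + ⟪νseq (φ j), η'⟫)
        = fun j => ⟪νseq (φ j), η + η'⟫ := by
      funext j; rw [inner_add_right]
    rw [← this] at *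
    exact (hL (η + η')).congr (fun j => by rw [inner_add_right])
  have hLsmul : ∀ (c : ℝ) (η : H), L (c • η) = c * L η := by
    intro c η
    refine tendsto_nhds_unique ?_ ((hL η).const_mul c)
    exact (hL (c • η)).congr (fun j => by rw [real_inner_smul_right])
  have hLbound : ∀ η : H, |L η| ≤ R * ‖η‖ := by
    intro η
    refine le_of_tendsto' (hL η).abs (fun j => ?_)
    calc |⟪νseq (φ j), η⟫| ≤ ‖νseq (φ j)‖ * ‖η‖ := abs_real_inner_le_norm _ _
      _ ≤ R * ‖η‖ := mul_le_mul_of_nonneg_right (hR _) (norm_nonneg _)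
  set Lfun : H →ₗ[ℝ] ℝ :=
    { toFun := L
      map_add' := hLadd
      map_smul' := hLsmul } with hLfun
  set Lc : H →L[ℝ] ℝ := Lfun.mkContinuous R (fun η => by
    rw [Real.norm_eq_abs]; exact hLbound η) with hLc
  set νhat : H := (InnerProductSpace.toDual ℝ H).symm Lc with hνhat
  have hinner : ∀ η : H, ⟪νhat, η⟫ = L η := by
    intro η
    exact InnerProductSpace.toDual_symm_apply
  -- weak convergence of the subsequence
  have hweak : ∀ η : H, Tendsto (fun j => ⟪νseq (φ j), η⟫) atTop (nhds ⟪νhat, η⟫) := by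
    intro η; rw [hinner η]; exact hL η
  -- Step 5: norm bound for νhat
  have hp1nn : 0 ≤ p.1 := hp.1.1
  have hnormhat : ‖νhat‖ ≤ p.1 := by
    have h1 : Tendsto (fun j => ⟪νseq (φ j), νhat⟫) atTop (nhds (‖νhat‖ ^ 2)) := by
      have := hweak νhat
      rwa [real_inner_self_eq_norm_sq] at this
    have h2 : Tendsto (fun j => ‖νseq (φ j)‖ * ‖νhat‖) atTop (nhds (p.1 * ‖νhat‖)) :=
      hnorm.mul_const _
    have h3 : ‖νhat‖ ^ 2 ≤ p.1 * ‖νhat‖ :=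
      le_of_tendsto_of_tendsto' h1 h2 (fun j => real_inner_le_norm _ _)
    nlinarith [norm_nonneg νhat]
  -- Step 6: convergence of W and of the data term
  have hWconv : Tendsto (fun j => W (νseq (φ j))) atTop (nhds (W νhat)) := by
    rw [tendsto_iff_norm_sub_tendsto_zero]
    exact hW νhat (fun j => νseq (φ j)) hweak
  have hgφ : Tendsto (fun j => gseq (φ j)) atTop (nhds g) := hgconv.comp hφ.tendsto_atTop
  have hGconv : Tendsto (fun j => G (W (νseq (φ j)), gseq (φ j))) atTop
      (nhds (G (W νhat, g))) :=
    (hGcont.tendsto _).comp (hWconv.prodMk_nhds hgφ)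
  -- Step 7: νhat is a minimizer
  refine ⟨φ, hφ, νhat, hweak, fun ν => ?_⟩
  have hE1 : Tendsto (fun j => γ * ‖νseq (φ j)‖ ^ 2 + G (W (νseq (φ j)), gseq (φ j)))
      atTop (nhds (γ * p.1 ^ 2 + G (W νhat, g))) :=
    ((hnorm.pow 2).const_mul γ).add hGconv
  have hE2 : Tendsto (fun j => γ * ‖ν‖ ^ 2 + G (W ν, gseq (φ j)))
      atTop (nhds (γ * ‖ν‖ ^ 2 + G (W ν, g))) :=
    tendsto_const_nhds.add ((hGcont.tendsto _).comp (tendsto_const_nhds.prodMk_nhds hgφ))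
  have hkey : γ * p.1 ^ 2 + G (W νhat, g) ≤ γ * ‖ν‖ ^ 2 + G (W ν, g) :=
    le_of_tendsto_of_tendsto' hE1 hE2 (fun j => hmin (φ j) ν)
  nlinarith [norm_nonneg νhat, hnormhat, hp1nn, hγ, mul_le_mul hnormhat hnormhat (norm_nonneg νhat) hp1nn]
end

section
/- Let H be a separable real Hilbert space, X a real normed space, Y a metric space, W : H → X weak-to-norm sequentially continuous, T : X → Y continuous, and D : Y × Y → [0,∞) jointly continuous with the property that D(y, y') = 0 implies y = y'. Suppose there exists ν* ∈ H with T(W(ν*)) = g for the ideal data g ∈ Y. Let (δ_k) be positive reals with δ_k → 0, let (g_k) ⊂ Y satisfy D(g, g_k) ≤ δ_k² and g_k → g, and let (γ_k) be positive reals with γ_k → 0 and δ_k²/γ_k → 0. If for each k, ν_k ∈ H is a minimizer of ν ↦ γ_k‖ν‖_H² + D(T(W(ν)), g_k), then there exist a subsequence (ν_{k_j}) and ν̃ ∈ H such that ν_{k_j} ⇀ ν̃ weakly in H and T(W(ν̃)) = g. (Convergence of the indirect registration scheme as the data error tends to zero.) -/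
open Filter
open scoped RealInnerProductSpace

lemma weak_seq_compact_of_bounded
    (H : Type) [NormedAddCommGroup H] [InnerProductSpace ℝ H] [CompleteSpace H]
    [TopologicalSpace.SeparableSpace H]
    (M : ℝ) (v : ℕ → H) (hv : ∀ k, ‖v k‖ ≤ M) :
    ∃ φ : ℕ → ℕ, StrictMono φ ∧ ∃ ν : H,
      ∀ η : H, Tendsto (fun j => ⟪v (φ j), η⟫) atTop (nhds ⟪ν, η⟫) := by
  have : Nonempty H := ⟨0⟩
  set u : ℕ → H := TopologicalSpace.denseSeq H with hu
  have hud : DenseRange u := TopologicalSpace.denseRange_denseSeq H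
  have hM0 : 0 ≤ M := le_trans (norm_nonneg (v 0)) (hv 0)
  -- embed into a compact subset of ℕ → ℝ
  set F : ℕ → (ℕ → ℝ) := fun k n => ⟪v k, u n⟫ with hF
  have hbound : ∀ k η, |⟪v k, η⟫| ≤ M * ‖η‖ := by
    intro k η
    calc |⟪v k, η⟫| ≤ ‖v k‖ * ‖η‖ := abs_real_inner_le_norm _ _
      _ ≤ M * ‖η‖ := by gcongr; exact hv k
  have hs : IsCompact (Set.univ.pi fun n => Set.Icc (-(M * ‖u n‖)) (M * ‖u n‖)) :=
    isCompact_univ_pi fun n => isCompact_Icc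
  have hmem : ∀ k, F k ∈ Set.univ.pi fun n => Set.Icc (-(M * ‖u n‖)) (M * ‖u n‖) := by
    intro k
    rw [Set.mem_univ_pi]
    intro n
    rw [Set.mem_Icc, ← abs_le]
    exact hbound k (u n)
  obtain ⟨a, -, φ, hφ, hconv⟩ := hs.tendsto_subseq hmem
  have hcoord : ∀ n, Tendsto (fun j => ⟪v (φ j), u n⟫) atTop (nhds (a n)) := by
    intro n
    exact (tendsto_pi_nhds.mp hconv) n
  -- Cauchy for every η by density
  have hCauchy : ∀ η : H, CauchySeq fun j => ⟪v (φ j), η⟫ := by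
    intro η
    rw [Metric.cauchySeq_iff]
    intro ε hε
    have hε4 : 0 < ε / (4 * (M + 1)) := by positivity
    obtain ⟨n, hn⟩ := hud.exists_dist_lt η hε4
    have hc : CauchySeq fun j => ⟪v (φ j), u n⟫ := (hcoord n).cauchySeq
    rw [Metric.cauchySeq_iff] at hc
    obtain ⟨N, hN⟩ := hc (ε / 2) (by positivity)
    refine ⟨N, fun i hi j hj => ?_⟩
    have key : ∀ m, |⟪v (φ m), η⟫ - ⟪v (φ m), u n⟫| ≤ ε / 4 := by
      intro m
      rw [← inner_sub_right]
      calc |⟪v (φ m), η - u n⟫| ≤ M * ‖η - u n‖ := hbound _ _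
        _ ≤ M * (ε / (4 * (M + 1))) := by
            gcongr
            rw [← dist_eq_norm]
            exact hn.le
        _ ≤ (M + 1) * (ε / (4 * (M + 1))) := by gcongr; linarith
        _ = ε / 4 := by field_simp
    have h1 := key i
    have h2 := key j
    have h3 := hN i hi j hj
    rw [Real.dist_eq] at h3 ⊢
    calc |⟪v (φ i), η⟫ - ⟪v (φ j), η⟫|
        ≤ |⟪v (φ i), η⟫ - ⟪v (φ i), u n⟫| + |⟪v (φ i), u n⟫ - ⟪v (φ j), u n⟫|
          + |⟪v (φ j), u n⟫ - ⟪v (φ j), η⟫| := by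
          have := abs_sub_le (⟪v (φ i), η⟫) (⟪v (φ i), u n⟫) (⟪v (φ j), η⟫)
          have := abs_sub_le (⟪v (φ i), u n⟫) (⟪v (φ j), u n⟫) (⟪v (φ j), η⟫)
          linarith [abs_sub_le (⟪v (φ i), η⟫) (⟪v (φ i), u n⟫) (⟪v (φ j), η⟫),
            abs_sub_le (⟪v (φ i), u n⟫) (⟪v (φ j), u n⟫) (⟪v (φ j), η⟫)]
      _ < ε := by
          have h2' : |⟪v (φ j), u n⟫ - ⟪v (φ j), η⟫| ≤ ε / 4 := by
            rw [abs_sub_comm]; exact h2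
          linarith
  -- limits define a bounded linear functional
  set L : H → ℝ := fun η => limUnder atTop fun j => ⟪v (φ j), η⟫ with hL
  have hLt : ∀ η, Tendsto (fun j => ⟪v (φ j), η⟫) atTop (nhds (L η)) :=
    fun η => (hCauchy η).tendsto_limUnder
  have hadd : ∀ x y : H, L (x + y) = L x + L y := by
    intro x y
    refine tendsto_nhds_unique (hLt (x + y)) ?_
    have := (hLt x).add (hLt y)
    simpa [inner_add_right] using this
  have hsmul : ∀ (c : ℝ) (x : H), L (c • x) = c * L x := by
    intro c x
    refine tendsto_nhds_unique (hLt (c • x)) ?_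
    have := (hLt x).const_mul c
    simpa [real_inner_smul_right] using this
  have hLbound : ∀ η, ‖L η‖ ≤ M * ‖η‖ := by
    intro η
    rw [Real.norm_eq_abs]
    exact le_of_tendsto (hLt η).abs (Eventually.of_forall fun j => hbound _ _)
  set f : H →L[ℝ] ℝ :=
    LinearMap.mkContinuous
      { toFun := L, map_add' := hadd, map_smul' := hsmul } M hLbound with hfdef
  refine ⟨φ, hφ, (InnerProductSpace.toDual ℝ H).symm f, fun η => ?_⟩
  have : ⟪(InnerProductSpace.toDual ℝ H).symm f, η⟫ = f η := by
    rw [← InnerProductSpace.toDual_apply_apply, LinearIsometryEquiv.apply_symm_apply]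
  rw [this]
  exact hLt η

/-- **Convergence of the indirect registration scheme as the data error tends to zero.**
`W : H → X` is weak-to-norm sequentially continuous, `T : X → Y` continuous and
`D : Y × Y → [0,∞)` jointly continuous with `D y y' = 0 → y = y'`.  Suppose
`T (W ν*) = g` for some `ν*`.  Let `δ_k → 0`, `D(g, g_k) ≤ δ_k²`, `g_k → g`, `γ_k → 0` and
`δ_k²/γ_k → 0`, and let each `ν_k` minimize `ν ↦ γ_k‖ν‖² + D(T (W ν), g_k)`.  Then some
subsequence of `(ν_k)` converges weakly to a `ν̃` with `T (W ν̃) = g`. -/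
theorem indirect_registration_convergence
    (H : Type) [NormedAddCommGroup H] [InnerProductSpace ℝ H] [CompleteSpace H]
    [TopologicalSpace.SeparableSpace H]
    (X : Type) [NormedAddCommGroup X] [NormedSpace ℝ X]
    (Y : Type) [MetricSpace Y]
    (W : H → X)
    (hW : ∀ (ν : H) (νseq : ℕ → H),
      (∀ η : H, Tendsto (fun k => ⟪νseq k, η⟫) atTop (nhds ⟪ν, η⟫)) →
      Tendsto (fun k => ‖W (νseq k) - W ν‖) atTop (nhds 0))
    (T : X → Y) (hT : Continuous T)
    (D : Y × Y → ℝ) (hDcont : Continuous D) (hDnonneg : ∀ p, 0 ≤ D p)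
    (hDsep : ∀ y y' : Y, D (y, y') = 0 → y = y')
    (g : Y) (νstar : H) (hexact : T (W νstar) = g)
    (δ : ℕ → ℝ) (hδpos : ∀ k, 0 < δ k) (hδ0 : Tendsto δ atTop (nhds 0))
    (gseq : ℕ → Y) (hgD : ∀ k, D (g, gseq k) ≤ (δ k) ^ 2)
    (hgconv : Tendsto gseq atTop (nhds g))
    (γ : ℕ → ℝ) (hγpos : ∀ k, 0 < γ k) (hγ0 : Tendsto γ atTop (nhds 0))
    (hrate : Tendsto (fun k => (δ k) ^ 2 / γ k) atTop (nhds 0))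
    (νseq : ℕ → H)
    (hmin : ∀ k, ∀ ν : H,
      γ k * ‖νseq k‖ ^ 2 + D (T (W (νseq k)), gseq k)
        ≤ γ k * ‖ν‖ ^ 2 + D (T (W ν), gseq k)) :
    ∃ (sub : ℕ → ℕ), StrictMono sub ∧ ∃ νtilde : H,
      (∀ η : H, Tendsto (fun j => ⟪νseq (sub j), η⟫) atTop (nhds ⟪νtilde, η⟫)) ∧
      T (W νtilde) = g := by
  -- bound on the regularization rate
  have hBdd := hrate.bddAbove_range
  obtain ⟨B, hB⟩ := hBdd
  have hBk : ∀ k, (δ k) ^ 2 / γ k ≤ B := fun k => hB (Set.mem_range_self k)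
  -- uniform bound on the minimizers
  have hC : ∀ k, ‖νseq k‖ ^ 2 ≤ ‖νstar‖ ^ 2 + B := by
    intro k
    have h1 := hmin k νstar
    rw [hexact] at h1
    have h2 := hgD k
    have h3 := hDnonneg (T (W (νseq k)), gseq k)
    have h4 : γ k * ‖νseq k‖ ^ 2 ≤ γ k * ‖νstar‖ ^ 2 + δ k ^ 2 := by linarith
    have h5 : γ k * ‖νseq k‖ ^ 2 ≤ γ k * (‖νstar‖ ^ 2 + δ k ^ 2 / γ k) := by
      rw [mul_add, mul_div_cancel₀ _ (hγpos k).ne']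
      linarith
    have h6 := le_of_mul_le_mul_left h5 (hγpos k)
    have := hBk k
    linarith
  have hvM : ∀ k, ‖νseq k‖ ≤ Real.sqrt (‖νstar‖ ^ 2 + B) := by
    intro k
    have : ‖νseq k‖ = Real.sqrt (‖νseq k‖ ^ 2) := by
      rw [Real.sqrt_sq (norm_nonneg _)]
    rw [this]
    exact Real.sqrt_le_sqrt (hC k)
  obtain ⟨φ, hφ, νtilde, hweak⟩ :=
    weak_seq_compact_of_bounded H (Real.sqrt (‖νstar‖ ^ 2 + B)) νseq hvM
  refine ⟨φ, hφ, νtilde, hweak, ?_⟩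
  -- norm convergence of the deformations along the subsequence
  have hWnorm := hW νtilde (fun j => νseq (φ j)) hweak
  have hWc : Tendsto (fun j => W (νseq (φ j))) atTop (nhds (W νtilde)) :=
    tendsto_iff_norm_sub_tendsto_zero.mpr hWnorm
  have hTc : Tendsto (fun j => T (W (νseq (φ j)))) atTop (nhds (T (W νtilde))) :=
    (hT.tendsto _).comp hWc
  have hφtop : Tendsto φ atTop atTop := hφ.tendsto_atTop
  have hgc : Tendsto (fun j => gseq (φ j)) atTop (nhds g) := hgconv.comp hφtop
  have hDc : Tendsto (fun j => D (T (W (νseq (φ j))), gseq (φ j))) atTop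
      (nhds (D (T (W νtilde), g))) :=
    (hDcont.tendsto _).comp (hTc.prodMk_nhds hgc)
  -- squeeze the discrepancy to zero
  have hub : ∀ j, D (T (W (νseq (φ j))), gseq (φ j))
      ≤ γ (φ j) * ‖νstar‖ ^ 2 + δ (φ j) ^ 2 := by
    intro j
    have h1 := hmin (φ j) νstar
    rw [hexact] at h1
    have h2 := hgD (φ j)
    have h3 : 0 ≤ γ (φ j) * ‖νseq (φ j)‖ ^ 2 :=
      mul_nonneg (hγpos _).le (sq_nonneg _)
    linarith
  have hb : Tendsto (fun j => γ (φ j) * ‖νstar‖ ^ 2 + δ (φ j) ^ 2) atTop (nhds 0) := by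
    have h1 : Tendsto (fun j => γ (φ j) * ‖νstar‖ ^ 2) atTop (nhds (0 * ‖νstar‖ ^ 2)) :=
      (hγ0.comp hφtop).mul_const _
    have h2 : Tendsto (fun j => δ (φ j) ^ 2) atTop (nhds (0 ^ 2)) :=
      (hδ0.comp hφtop).pow 2
    simpa using h1.add h2
  have hD0 : Tendsto (fun j => D (T (W (νseq (φ j))), gseq (φ j))) atTop (nhds 0) :=
    squeeze_zero (fun j => hDnonneg _) hub hb
  exact hDsep _ _ (tendsto_nhds_unique hDc hD0)
end
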